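/- arXiv:2107.11917 — 5 statements merged into one kernel-verified Lean document; each statement's English description precedes it below -/
import Mathlib

section
/- Assume hypothesis (H), let a < b ≤ d in [0,1] with m₀(θ) ≤ 0 on [a,d] and m₀(θ) < 0 for all θ ∈ (a,b), and assume in addition that x and y are C¹ in t and satisfy the angular momentum identity x(t,θ) y_t(t,θ) − y(t,θ) x_t(t,θ) = m₀(θ) for all (t,θ). Then for every t ∈ (0,T) one has y(t,θ) < 0 for all θ ∈ (a,b), and ∫_a^b x_t(t,θ)/x(t,θ) dθ ≤ ∫_a^b y_t(t,θ)/y(t,θ) dθ − N / x(t,b)², where N = (2/γ) (∫_a^b √|m₀(θ)| dθ)². -/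
open Set

/-- under hypothesis (H) plus the angular momentum identity
x y_t - y x_t = m₀, if m₀ ≤ 0 on [a,d] and m₀ < 0 on (a,b) (a < b ≤ d), then for
t ∈ (0,T): y(t,·) < 0 on (a,b) and
∫_a^b x_t/x ≤ ∫_a^b y_t/y - N / x(t,b)², N = (2/γ)(∫_a^b √|m₀|)². -/
theorem stmt_13
    -- hypothesis (H)
    (γ σ : ℝ) (hγ : 0 < γ) (hσ : 0 < σ)
    (T : EReal) (hT : 0 < T)
    (J : Set ℝ) (hJ : J = {t : ℝ | 0 ≤ t ∧ (t : EReal) < T})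
    (m₀ : ℝ → ℝ) (hm₀cont : Continuous m₀) (hm₀per : ∀ θ : ℝ, m₀ (θ + 1) = m₀ θ)
    (x y xθ : ℝ → ℝ → ℝ)
    (hxcont : ContinuousOn (fun p : ℝ × ℝ => x p.1 p.2) (J ×ˢ univ))
    (hycont : ContinuousOn (fun p : ℝ × ℝ => y p.1 p.2) (J ×ˢ univ))
    (hxper : ∀ t ∈ J, ∀ θ : ℝ, x t (θ + 1) = x t θ)
    (hyper : ∀ t ∈ J, ∀ θ : ℝ, y t (θ + 1) = y t θ)
    (hxθ : ∀ t ∈ J, ∀ θ : ℝ, HasDerivAt (x t) (xθ t θ) θ)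
    (hyC1 : ∀ t ∈ J, ∀ θ : ℝ, DifferentiableAt ℝ (y t) θ)
    (hxpos : ∀ t ∈ J, ∀ θ : ℝ, 0 < x t θ)
    (hy0 : ∀ θ : ℝ, y 0 θ = 0)
    (hyform : ∀ t ∈ J, ∀ θ : ℝ,
      y t θ = -γ * xθ t θ + σ * x t θ * ∫ τ in (0:ℝ)..t, x τ θ ^ γ)
    (hratio : ∀ θ : ℝ, ∀ t ∈ J,
      HasDerivWithinAt (fun s => y s θ / x s θ) (m₀ θ / x t θ ^ 2) J t)
    (hxint : ∀ t ∈ J, (∫ θ in (0:ℝ)..1, x t θ ^ γ) = 1)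
    -- x and y are C¹ in t
    (xt yt : ℝ → ℝ → ℝ)
    (hxt : ∀ θ : ℝ, ∀ t ∈ J, HasDerivWithinAt (fun s => x s θ) (xt t θ) J t)
    (hyt : ∀ θ : ℝ, ∀ t ∈ J, HasDerivWithinAt (fun s => y s θ) (yt t θ) J t)
    -- conserved angular momentum
    (hang : ∀ t ∈ J, ∀ θ : ℝ, x t θ * yt t θ - y t θ * xt t θ = m₀ θ)
    -- points a < b ≤ d in [0,1] with m₀ ≤ 0 on [a,d] and m₀ < 0 on (a,b)
    (a b d : ℝ) (ha : 0 ≤ a) (hab : a < b) (hbd : b ≤ d) (hd : d ≤ 1)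
    (hm : ∀ θ ∈ Icc a d, m₀ θ ≤ 0)
    (hmneg : ∀ θ ∈ Ioo a b, m₀ θ < 0) :
    ∀ t ∈ J, 0 < t →
      (∀ θ ∈ Ioo a b, y t θ < 0) ∧
      (∫ θ in a..b, xt t θ / x t θ)
        ≤ (∫ θ in a..b, yt t θ / y t θ)
          - (2 / γ) * (∫ θ in a..b, Real.sqrt |m₀ θ|) ^ 2 / x t b ^ 2 := by
  intro t ht ht0
  have htT : (t : EReal) < T := by rw [hJ] at ht; exact ht.2
  obtain ⟨t', htt'E, ht'T⟩ := EReal.lt_iff_exists_real_btwn.mp htT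
  have htt' : t < t' := by exact_mod_cast htt'E
  have ht'0 : 0 < t' := ht0.trans htt'
  have hsubJ : Icc (0:ℝ) t' ⊆ J := by
    intro s hs
    rw [hJ]
    exact ⟨hs.1, lt_of_le_of_lt (by exact_mod_cast hs.2) ht'T⟩
  have hJnhds : ∀ s ∈ Ioo (0:ℝ) t', J ∈ nhds s := by
    intro s hs
    exact Filter.mem_of_superset (Ioo_mem_nhds hs.1 hs.2)
      (fun r hr => hsubJ ⟨hr.1.le, hr.2.le⟩)
  have htmem : t ∈ Ioo (0:ℝ) t' := ⟨ht0, htt'⟩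
  have htJ' : t ∈ Icc (0:ℝ) t' := ⟨ht0.le, htt'.le⟩
  have hmab : ∀ θ ∈ Icc a b, m₀ θ ≤ 0 := fun θ hθ => hm θ ⟨hθ.1, hθ.2.trans hbd⟩
  -- the "projected" version of x : globally continuous, positive, agrees with x on [0,t']
  obtain ⟨X, hXcont, hXpos, hXeq⟩ :
      ∃ X : ℝ → ℝ → ℝ, Continuous (fun p : ℝ × ℝ => X p.1 p.2) ∧
        (∀ s θ : ℝ, 0 < X s θ) ∧ ∀ s ∈ Icc (0:ℝ) t', ∀ θ : ℝ, X s θ = x s θ := by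
    refine ⟨fun s θ => x (max 0 (min s t')) θ, ?_, ?_, ?_⟩
    · have hc : Continuous fun p : ℝ × ℝ => ((max 0 (min p.1 t'), p.2) : ℝ × ℝ) := by fun_prop
      exact hxcont.comp_continuous hc
        (fun p => ⟨hsubJ ⟨le_max_left _ _, max_le ht'0.le (min_le_right _ _)⟩, mem_univ _⟩)
    · intro s θ
      exact hxpos _ (hsubJ ⟨le_max_left _ _, max_le ht'0.le (min_le_right _ _)⟩) θ
    · intro s hs θ
      simp only [min_eq_left hs.2, max_eq_right hs.1]
  -- primitives in time
  obtain ⟨Iq, hIqeq⟩ : ∃ Iq : ℝ → ℝ → ℝ,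
      ∀ s θ : ℝ, Iq s θ = ∫ τ in (0:ℝ)..s, (X τ θ ^ 2)⁻¹ := ⟨_, fun _ _ => rfl⟩
  obtain ⟨Ig, hIgeq⟩ : ∃ Ig : ℝ → ℝ → ℝ,
      ∀ s θ : ℝ, Ig s θ = ∫ τ in (0:ℝ)..s, X τ θ ^ γ := ⟨_, fun _ _ => rfl⟩
  have hqcont : Continuous fun p : ℝ × ℝ => (X p.1 p.2 ^ 2)⁻¹ :=
    (hXcont.pow 2).inv₀ (fun p => (pow_pos (hXpos p.1 p.2) 2).ne')
  have hrcont : Continuous fun p : ℝ × ℝ => X p.1 p.2 ^ γ :=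
    hXcont.rpow_const (fun p => Or.inl (hXpos p.1 p.2).ne')
  have hswap : Continuous fun q : (ℝ × ℝ) × ℝ => ((q.2, q.1.2) : ℝ × ℝ) := by fun_prop
  have hIqcont : Continuous fun p : ℝ × ℝ => Iq p.1 p.2 := by
    simp only [hIqeq]
    exact intervalIntegral.continuous_parametric_intervalIntegral_of_continuous
      (f := fun (p : ℝ × ℝ) τ => (X τ p.2 ^ 2)⁻¹)
      (hqcont.comp hswap) continuous_fst
  have hIgcont : Continuous fun p : ℝ × ℝ => Ig p.1 p.2 := by
    simp only [hIgeq]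
    exact intervalIntegral.continuous_parametric_intervalIntegral_of_continuous
      (f := fun (p : ℝ × ℝ) τ => X τ p.2 ^ γ)
      (hrcont.comp hswap) continuous_fst
  have hIq' : ∀ (s θ : ℝ), HasDerivAt (fun r => Iq r θ) ((X s θ ^ 2)⁻¹) s := by
    intro s θ
    have hcm : Continuous fun τ : ℝ => ((τ, θ) : ℝ × ℝ) := by fun_prop
    have hc : Continuous fun τ => (X τ θ ^ 2)⁻¹ := hqcont.comp hcm
    have : (fun r => Iq r θ) = fun r => ∫ τ in (0:ℝ)..r, (X τ θ ^ 2)⁻¹ :=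
      funext fun r => hIqeq r θ
    rw [this]
    exact intervalIntegral.integral_hasDerivAt_right (hc.intervalIntegrable 0 s)
      hc.aestronglyMeasurable.stronglyMeasurableAtFilter hc.continuousAt
  have hIg' : ∀ (s θ : ℝ), HasDerivAt (fun r => Ig r θ) (X s θ ^ γ) s := by
    intro s θ
    have hcm : Continuous fun τ : ℝ => ((τ, θ) : ℝ × ℝ) := by fun_prop
    have hc : Continuous fun τ => X τ θ ^ γ := hrcont.comp hcm
    have : (fun r => Ig r θ) = fun r => ∫ τ in (0:ℝ)..r, X τ θ ^ γ :=
      funext fun r => hIgeq r θ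
    rw [this]
    exact intervalIntegral.integral_hasDerivAt_right (hc.intervalIntegrable 0 s)
      hc.aestronglyMeasurable.stronglyMeasurableAtFilter hc.continuousAt
  -- slice continuity of x and y
  have hxcont1 : ∀ θ : ℝ, ContinuousOn (fun τ => x τ θ) (Icc (0:ℝ) t') := by
    intro θ
    have hcm : Continuous fun τ : ℝ => ((τ, θ) : ℝ × ℝ) := by fun_prop
    have : ContinuousOn ((fun p : ℝ × ℝ => x p.1 p.2) ∘ fun τ => ((τ, θ) : ℝ × ℝ))
        (Icc (0:ℝ) t') := by
      apply hxcont.comp hcm.continuousOn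
      intro τ hτ
      exact ⟨hsubJ hτ, mem_univ _⟩
    exact this
  have hycont1 : ∀ θ : ℝ, ContinuousOn (fun τ => y τ θ) (Icc (0:ℝ) t') := by
    intro θ
    have hcm : Continuous fun τ : ℝ => ((τ, θ) : ℝ × ℝ) := by fun_prop
    have : ContinuousOn ((fun p : ℝ × ℝ => y p.1 p.2) ∘ fun τ => ((τ, θ) : ℝ × ℝ))
        (Icc (0:ℝ) t') := by
      apply hycont.comp hcm.continuousOn
      intro τ hτ
      exact ⟨hsubJ hτ, mem_univ _⟩
    exact this
  -- Step A : y s θ = m₀ θ * x s θ * Iq s θ  for s ∈ [0,t']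
  have hA : ∀ s ∈ Icc (0:ℝ) t', ∀ θ : ℝ, y s θ = m₀ θ * x s θ * Iq s θ := by
    intro s hs θ
    have hIcc : Icc (0:ℝ) s ⊆ Icc (0:ℝ) t' := Icc_subset_Icc le_rfl hs.2
    have hcontyx : ContinuousOn (fun τ => y τ θ / x τ θ) (Icc (0:ℝ) s) :=
      ((hycont1 θ).mono hIcc).div ((hxcont1 θ).mono hIcc)
        (fun τ hτ => (hxpos τ (hsubJ (hIcc hτ)) θ).ne')
    have hderiv : ∀ τ ∈ Ioo (0:ℝ) s, HasDerivAt (fun r => y r θ / x r θ) (m₀ θ / x τ θ ^ 2) τ := by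
      intro τ hτ
      have hτJ : τ ∈ Ioo (0:ℝ) t' := ⟨hτ.1, lt_of_lt_of_le hτ.2 hs.2⟩
      exact (hratio θ τ (hsubJ ⟨hτ.1.le, hτJ.2.le⟩)).hasDerivAt (hJnhds τ hτJ)
    have hint : IntervalIntegrable (fun τ => m₀ θ / x τ θ ^ 2) MeasureTheory.volume 0 s := by
      apply ContinuousOn.intervalIntegrable
      rw [uIcc_of_le hs.1]
      exact continuousOn_const.div (((hxcont1 θ).mono hIcc).pow 2)
        (fun τ hτ => (pow_pos (hxpos τ (hsubJ (hIcc hτ)) θ) 2).ne')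
    have hFTC := intervalIntegral.integral_eq_sub_of_hasDerivAt_of_le hs.1 hcontyx hderiv hint
    have h0 : y 0 θ / x 0 θ = 0 := by rw [hy0]; simp
    have hLHS : (∫ τ in (0:ℝ)..s, m₀ θ / x τ θ ^ 2) = m₀ θ * Iq s θ := by
      rw [hIqeq s θ, ← intervalIntegral.integral_const_mul]
      apply intervalIntegral.integral_congr
      intro τ hτ
      rw [uIcc_of_le hs.1] at hτ
      show m₀ θ / x τ θ ^ 2 = m₀ θ * (X τ θ ^ 2)⁻¹
      rw [hXeq τ (hIcc hτ) θ, div_eq_mul_inv]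
    rw [h0, sub_zero, hLHS] at hFTC
    have hxne := (hxpos s (hsubJ hs) θ).ne'
    rw [eq_comm, div_eq_iff hxne] at hFTC
    rw [hFTC]
    ring
  have hIqpos : ∀ θ : ℝ, 0 < Iq t θ := by
    intro θ
    have hcm : Continuous fun τ : ℝ => ((τ, θ) : ℝ × ℝ) := by fun_prop
    have hc : Continuous fun τ => (X τ θ ^ 2)⁻¹ := hqcont.comp hcm
    rw [hIqeq t θ]
    exact intervalIntegral.intervalIntegral_pos_of_pos (hc.intervalIntegrable 0 t)
      (fun τ => inv_pos.mpr (pow_pos (hXpos τ θ) 2)) ht0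
  -- PART 1
  have part1 : ∀ θ ∈ Ioo a b, y t θ < 0 := by
    intro θ hθ
    rw [hA t htJ' θ]
    exact mul_neg_of_neg_of_pos
      (mul_neg_of_neg_of_pos (hmneg θ hθ) (hxpos t ht θ)) (hIqpos θ)
  -- the time integral in hyform equals Ig
  have hIg_eq : ∀ s ∈ Icc (0:ℝ) t', ∀ θ : ℝ,
      (∫ τ in (0:ℝ)..s, x τ θ ^ γ) = Ig s θ := by
    intro s hs θ
    rw [hIgeq s θ]
    apply intervalIntegral.integral_congr
    intro τ hτ
    rw [uIcc_of_le hs.1] at hτ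
    show x τ θ ^ γ = X τ θ ^ γ
    rw [hXeq τ (Icc_subset_Icc le_rfl hs.2 hτ) θ]
  -- Step B : formula for xθ
  have hB : ∀ s ∈ Icc (0:ℝ) t', ∀ θ : ℝ,
      xθ s θ = x s θ * ((σ * Ig s θ - m₀ θ * Iq s θ) / γ) := by
    intro s hs θ
    have h1 := hyform s (hsubJ hs) θ
    rw [hIg_eq s hs θ, hA s hs θ] at h1
    have hγ' : γ ≠ 0 := hγ.ne'
    have h2 : xθ s θ = (σ * x s θ * Ig s θ - m₀ θ * x s θ * Iq s θ) / γ := by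
      rw [eq_div_iff hγ']
      linear_combination h1
    rw [h2]
    ring
  -- c and its properties
  obtain ⟨c, hceq⟩ : ∃ c : ℝ → ℝ → ℝ,
      ∀ s u : ℝ, c s u = (σ * Ig s u - m₀ u * Iq s u) / γ := ⟨_, fun _ _ => rfl⟩
  have hccont : Continuous fun p : ℝ × ℝ => c p.1 p.2 := by
    simp only [hceq]
    exact ((continuous_const.mul hIgcont).sub
      ((hm₀cont.comp continuous_snd).mul hIqcont)).div_const γ
  -- Step C : log x FTC in θ
  have hC : ∀ s ∈ Icc (0:ℝ) t', ∀ θ : ℝ,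
      Real.log (x s θ) - Real.log (x s a) = ∫ u in a..θ, c s u := by
    intro s hs θ
    have hderiv : ∀ u ∈ uIcc a θ, HasDerivAt (fun u => Real.log (x s u)) (c s u) u := by
      intro u _
      have hx' := (hxθ s (hsubJ hs) u).log (hxpos s (hsubJ hs) u).ne'
      rw [hB s hs u, mul_comm, mul_div_assoc,
        div_self (hxpos s (hsubJ hs) u).ne', mul_one] at hx'
      rw [hceq s u]
      exact hx'
    have hcm : Continuous fun u : ℝ => ((s, u) : ℝ × ℝ) := by fun_prop
    have hint : IntervalIntegrable (fun u => c s u) MeasureTheory.volume a θ :=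
      (hccont.comp hcm).intervalIntegrable a θ
    rw [eq_comm]
    exact intervalIntegral.integral_eq_sub_of_hasDerivAt hderiv hint
  -- e and derivative of c in s
  obtain ⟨e, heeq⟩ : ∃ e : ℝ → ℝ → ℝ,
      ∀ s u : ℝ, e s u = (σ * X s u ^ γ - m₀ u * (X s u ^ 2)⁻¹) / γ := ⟨_, fun _ _ => rfl⟩
  have hecont : Continuous fun p : ℝ × ℝ => e p.1 p.2 := by
    simp only [heeq]
    exact ((continuous_const.mul hrcont).sub
      ((hm₀cont.comp continuous_snd).mul hqcont)).div_const γ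
  have hc' : ∀ (s u : ℝ), HasDerivAt (fun r => c r u) (e s u) s := by
    intro s u
    have h1 : (fun r => c r u) = fun r => (σ * Ig r u - m₀ u * Iq r u) / γ :=
      funext fun r => hceq r u
    rw [h1, heeq s u]
    exact (((hIg' s u).const_mul σ).sub ((hIq' s u).const_mul (m₀ u))).div_const γ
  -- Step D : derivative of the parametric integral and formula for xt/x
  have hphi : ∀ θ : ℝ, HasDerivAt (fun s => ∫ u in a..θ, c s u) (∫ u in a..θ, e t u) t := by
    intro θ
    obtain ⟨M, hM⟩ := (isCompact_Icc.prod isCompact_uIcc).exists_bound_of_continuousOn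
      (s := Icc (t - 1) (t + 1) ×ˢ uIcc a θ) hecont.continuousOn
    have hbound : ∀ u : ℝ, u ∈ uIoc a θ → ∀ s ∈ Metric.ball t 1, ‖e s u‖ ≤ M := by
      intro u hu s hs
      have hs' : s ∈ Icc (t - 1) (t + 1) := by
        rw [Real.ball_eq_Ioo] at hs
        exact ⟨hs.1.le, hs.2.le⟩
      exact hM (s, u) ⟨hs', uIoc_subset_uIcc hu⟩
    have hcmt : Continuous fun u : ℝ => ((t, u) : ℝ × ℝ) := by fun_prop
    have key := intervalIntegral.hasDerivAt_integral_of_dominated_loc_of_deriv_le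
      (F := fun s u => c s u) (F' := fun s u => e s u) (x₀ := t) (s := Metric.ball t 1)
      (bound := fun _ => M) (a := a) (b := θ) (μ := MeasureTheory.volume)
      (Metric.ball_mem_nhds t one_pos)
      (Filter.Eventually.of_forall fun s => by
        have hcm : Continuous fun u : ℝ => ((s, u) : ℝ × ℝ) := by fun_prop
        exact (hccont.comp hcm).aestronglyMeasurable)
      ((hccont.comp hcmt).intervalIntegrable a θ)
      (hecont.comp hcmt).aestronglyMeasurable
      (Filter.Eventually.of_forall hbound)
      intervalIntegrable_const
      (Filter.Eventually.of_forall fun u _ s _ => hc' s u)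
    exact key.2
  have hlog_t : ∀ θ : ℝ, HasDerivAt (fun s => Real.log (x s θ)) (xt t θ / x t θ) t := by
    intro θ
    exact ((hxt θ t ht).hasDerivAt (hJnhds t htmem)).log (hxpos t ht θ).ne'
  have hD : ∀ θ : ℝ, xt t θ / x t θ = xt t a / x t a + ∫ u in a..θ, e t u := by
    intro θ
    have h1 : HasDerivAt (fun s => Real.log (x s θ) - Real.log (x s a))
        (xt t θ / x t θ - xt t a / x t a) t := (hlog_t θ).sub (hlog_t a)
    have h2 : HasDerivAt (fun s => Real.log (x s θ) - Real.log (x s a))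
        (∫ u in a..θ, e t u) t := by
      apply (hphi θ).congr_of_eventuallyEq
      filter_upwards [Ioo_mem_nhds htmem.1 htmem.2] with s hs
      exact hC s ⟨hs.1.le, hs.2.le⟩ θ
    have := h1.unique h2
    linarith
  -- F : continuous version of xt/x
  obtain ⟨F, hFeq⟩ : ∃ F : ℝ → ℝ,
      ∀ θ : ℝ, F θ = xt t a / x t a + ∫ u in a..θ, e t u := ⟨_, fun _ => rfl⟩
  have hFcont : Continuous F := by
    have hcm : Continuous fun q : ℝ × ℝ => ((t, q.2) : ℝ × ℝ) := by fun_prop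
    have hFe : F = fun θ => xt t a / x t a + ∫ u in a..θ, e t u := funext hFeq
    rw [hFe]
    apply continuous_const.add
    exact intervalIntegral.continuous_parametric_intervalIntegral_of_continuous
      (f := fun (_ : ℝ) u => e t u) (s := fun θ : ℝ => θ)
      (hecont.comp hcm) continuous_id
  have hfF : ∀ θ : ℝ, xt t θ / x t θ = F θ := fun θ => by rw [hFeq]; exact hD θ
  -- Hc : continuous version of m₀/(x y) on (a,b)
  obtain ⟨Hc, hHceq⟩ : ∃ Hc : ℝ → ℝ,
      ∀ θ : ℝ, Hc θ = ((X t θ) ^ 2 * Iq t θ)⁻¹ := ⟨_, fun _ => rfl⟩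
  have hXxt : ∀ θ : ℝ, X t θ = x t θ := fun θ => hXeq t htJ' θ
  have hcmt : Continuous fun θ : ℝ => ((t, θ) : ℝ × ℝ) := by fun_prop
  have hHccont : Continuous Hc := by
    have hHce : Hc = fun θ => ((X t θ) ^ 2 * Iq t θ)⁻¹ := funext hHceq
    rw [hHce]
    apply Continuous.inv₀
    · exact ((hXcont.comp hcmt).pow 2).mul (hIqcont.comp hcmt)
    · intro θ
      exact (mul_pos (pow_pos (hXpos t θ) 2) (hIqpos θ)).ne'
  have hHcpos : ∀ θ : ℝ, 0 < Hc θ := by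
    intro θ
    rw [hHceq θ]
    exact inv_pos.mpr (mul_pos (pow_pos (hXpos t θ) 2) (hIqpos θ))
  have hgf : ∀ θ ∈ Ioo a b, yt t θ / y t θ = xt t θ / x t θ + Hc θ := by
    intro θ hθ
    have hyneg := part1 θ hθ
    have hyne : y t θ ≠ 0 := hyneg.ne
    have hxne : x t θ ≠ 0 := (hxpos t ht θ).ne'
    have hangθ := hang t ht θ
    have hyval : y t θ = m₀ θ * x t θ * Iq t θ := hA t htJ' θ
    have hIqne : Iq t θ ≠ 0 := (hIqpos θ).ne'
    have hmne : m₀ θ ≠ 0 := (hmneg θ hθ).ne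
    have key : yt t θ / y t θ - xt t θ / x t θ = Hc θ := by
      rw [div_sub_div _ _ hyne hxne]
      rw [show yt t θ * x t θ - y t θ * xt t θ = m₀ θ by linear_combination hangθ]
      rw [hHceq θ, hXxt θ, hyval]
      field_simp
    linarith [key]
  -- integrability and splitting of the integrals
  have hHcInt : IntervalIntegrable Hc MeasureTheory.volume a b := hHccont.intervalIntegrable a b
  have hfInt : IntervalIntegrable (fun θ => xt t θ / x t θ) MeasureTheory.volume a b := by
    have : (fun θ : ℝ => xt t θ / x t θ) = F := funext hfF
    rw [this]
    exact hFcont.intervalIntegrable a b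
  have hne : ∀ᵐ θ : ℝ ∂(MeasureTheory.volume), θ ≠ b := by
    refine MeasureTheory.ae_iff.mpr ?_
    have : {θ : ℝ | ¬ θ ≠ b} = {b} := by ext θ; simp
    rw [this]
    exact Real.volume_singleton
  have hgae : ∀ᵐ θ ∂(MeasureTheory.volume : MeasureTheory.Measure ℝ),
      θ ∈ uIoc a b → yt t θ / y t θ = xt t θ / x t θ + Hc θ := by
    filter_upwards [hne] with θ hθb hθ
    rw [uIoc_of_le hab.le] at hθ
    exact hgf θ ⟨hθ.1, lt_of_le_of_ne hθ.2 hθb⟩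
  have hgInt : IntervalIntegrable (fun θ => yt t θ / y t θ) MeasureTheory.volume a b := by
    rw [intervalIntegrable_iff]
    have base := hfInt.add hHcInt
    rw [intervalIntegrable_iff] at base
    exact base.congr ((MeasureTheory.ae_restrict_iff' measurableSet_uIoc).mpr
      (hgae.mono fun θ h hmem => (h hmem).symm))
  have hsplit : (∫ θ in a..b, yt t θ / y t θ)
      = (∫ θ in a..b, xt t θ / x t θ) + ∫ θ in a..b, Hc θ := by
    rw [← intervalIntegral.integral_add hfInt hHcInt]
    exact intervalIntegral.integral_congr_ae hgae
  -- wc : continuous version of x * (-y)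
  obtain ⟨wc, hwceq⟩ : ∃ wc : ℝ → ℝ,
      ∀ θ : ℝ, wc θ = -m₀ θ * X t θ ^ 2 * Iq t θ := ⟨_, fun _ => rfl⟩
  have hwccont : Continuous wc := by
    have hwce : wc = fun θ => -m₀ θ * X t θ ^ 2 * Iq t θ := funext hwceq
    rw [hwce]
    exact ((hm₀cont.neg).mul ((hXcont.comp hcmt).pow 2)).mul (hIqcont.comp hcmt)
  have hxy_wc : ∀ θ : ℝ, x t θ * (-(y t θ)) = wc θ := by
    intro θ
    rw [hwceq θ, hA t htJ' θ, hXxt θ]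
    ring
  have hwc_nonneg : ∀ θ ∈ Icc a b, 0 ≤ wc θ := by
    intro θ hθ
    rw [hwceq θ]
    exact mul_nonneg (mul_nonneg (neg_nonneg.mpr (hmab θ hθ)) (pow_pos (hXpos t θ) 2).le)
      (hIqpos θ).le
  have hwc_pos : ∀ θ ∈ Ioo a b, 0 < wc θ := by
    intro θ hθ
    rw [hwceq θ]
    exact mul_pos (mul_pos (neg_pos.mpr (hmneg θ hθ)) (pow_pos (hXpos t θ) 2)) (hIqpos θ)
  -- the three quantities
  set Av := ∫ θ in a..b, Hc θ with hAv
  set Bv := ∫ θ in a..b, Real.sqrt |m₀ θ| with hBv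
  set Cv := ∫ θ in a..b, wc θ with hCv
  have hCpos : 0 < Cv :=
    intervalIntegral.intervalIntegral_pos_of_pos_on (hwccont.intervalIntegrable a b)
      (fun θ hθ => hwc_pos θ hθ) hab
  have hAnn : 0 ≤ Av :=
    intervalIntegral.integral_nonneg hab.le (fun θ _ => (hHcpos θ).le)
  have hsqm : Continuous fun θ : ℝ => Real.sqrt |m₀ θ| :=
    Real.continuous_sqrt.comp hm₀cont.abs
  -- pointwise identities for Cauchy-Schwarz
  have hsqHc : ∀ θ : ℝ, Real.sqrt (Hc θ) ^ 2 = Hc θ := fun θ => Real.sq_sqrt (hHcpos θ).le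
  have hsqwc : ∀ θ ∈ Icc a b, Real.sqrt (wc θ) ^ 2 = wc θ :=
    fun θ hθ => Real.sq_sqrt (hwc_nonneg θ hθ)
  have huv : ∀ θ ∈ Icc a b, Real.sqrt (Hc θ) * Real.sqrt (wc θ) = Real.sqrt |m₀ θ| := by
    intro θ hθ
    rw [← Real.sqrt_mul (hHcpos θ).le]
    congr 1
    rw [hHceq θ, hwceq θ, abs_of_nonpos (hmab θ hθ)]
    have h1 : X t θ ^ 2 * Iq t θ ≠ 0 :=
      (mul_pos (pow_pos (hXpos t θ) 2) (hIqpos θ)).ne'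
    field_simp
    field_simp [(hXpos t θ).ne', (hIqpos θ).ne']
  -- Cauchy–Schwarz via the discriminant trick
  have hCS : Bv ^ 2 ≤ Av * Cv := by
    set l := Bv / Cv with hl
    have hsqrtHccont : Continuous fun θ : ℝ => Real.sqrt (Hc θ) :=
      Real.continuous_sqrt.comp hHccont
    have hsqrtwccont : Continuous fun θ : ℝ => Real.sqrt (wc θ) :=
      Real.continuous_sqrt.comp hwccont
    have h1 : EqOn (fun θ => (Real.sqrt (Hc θ) - l * Real.sqrt (wc θ)) ^ 2)
        (fun θ => Hc θ - (2 * l) * Real.sqrt |m₀ θ| + l ^ 2 * wc θ) (uIcc a b) := by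
      intro θ hθ
      rw [uIcc_of_le hab.le] at hθ
      show (Real.sqrt (Hc θ) - l * Real.sqrt (wc θ)) ^ 2
        = Hc θ - (2 * l) * Real.sqrt |m₀ θ| + l ^ 2 * wc θ
      have e1 := hsqHc θ
      have e2 := hsqwc θ hθ
      have e3 := huv θ hθ
      linear_combination e1 + l ^ 2 * e2 - (2 * l) * e3
    have h2 : (∫ θ in a..b, (Real.sqrt (Hc θ) - l * Real.sqrt (wc θ)) ^ 2)
        = Av - 2 * l * Bv + l ^ 2 * Cv := by
      rw [intervalIntegral.integral_congr h1]
      have hc1 : Continuous fun θ : ℝ => 2 * l * Real.sqrt |m₀ θ| := continuous_const.mul hsqm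
      have hc2 : Continuous fun θ : ℝ => l ^ 2 * wc θ := continuous_const.mul hwccont
      rw [intervalIntegral.integral_add
        (hHcInt.sub (hc1.intervalIntegrable a b))
        (hc2.intervalIntegrable a b)]
      rw [intervalIntegral.integral_sub hHcInt (hc1.intervalIntegrable a b)]
      rw [intervalIntegral.integral_const_mul, intervalIntegral.integral_const_mul]
    have h0 : 0 ≤ Av - 2 * l * Bv + l ^ 2 * Cv := by
      rw [← h2]
      exact intervalIntegral.integral_nonneg hab.le (fun θ _ => sq_nonneg _)
    have hCne : Cv ≠ 0 := hCpos.ne'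
    have h3 : l ^ 2 * Cv = Bv ^ 2 / Cv := by rw [hl]; field_simp
    have h4 : 2 * l * Bv = 2 * (Bv ^ 2 / Cv) := by rw [hl]; field_simp
    rw [h3, h4] at h0
    have h5 : Bv ^ 2 / Cv ≤ Av := by linarith
    exact (div_le_iff₀ hCpos).mp h5
  -- FTC for x² in θ and the bound on Cv
  have hFTCx : (∫ θ in a..b, 2 * x t θ * xθ t θ) = x t b ^ 2 - x t a ^ 2 := by
    have hderiv : ∀ θ ∈ uIcc a b, HasDerivAt (fun u => x t u ^ 2) (2 * x t θ * xθ t θ) θ := by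
      intro θ _
      have h : HasDerivAt (fun u => x t u ^ 2) (((2 : ℕ) : ℝ) * x t θ ^ (2 - 1) * xθ t θ) θ :=
        (hxθ t ht θ).fun_pow 2
      convert h using 1
      push_cast
      ring
    have hint : IntervalIntegrable (fun θ => 2 * x t θ * xθ t θ) MeasureTheory.volume a b := by
      have heq2 : (fun θ : ℝ => 2 * x t θ * xθ t θ) = fun θ => 2 * X t θ ^ 2 * c t θ := by
        funext θ
        rw [hB t htJ' θ, hceq t θ, hXxt θ]
        ring
      rw [heq2]
      exact (((continuous_const.mul ((hXcont.comp hcmt).pow 2))).mul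
        (hccont.comp hcmt)).intervalIntegrable a b
    exact intervalIntegral.integral_eq_sub_of_hasDerivAt hderiv hint
  have hIgnn : ∀ θ : ℝ, 0 ≤ Ig t θ := by
    intro θ
    rw [hIgeq t θ]
    apply intervalIntegral.integral_nonneg ht0.le
    intro τ _
    exact Real.rpow_nonneg (hXpos τ θ).le γ
  have hwc_id : ∀ θ : ℝ, wc θ = γ / 2 * (2 * x t θ * xθ t θ) - σ * x t θ ^ 2 * Ig t θ := by
    intro θ
    have h1 := hyform t ht θ
    rw [hIg_eq t htJ' θ] at h1
    rw [← hxy_wc θ, h1]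
    ring
  have hsIgcont : Continuous fun θ : ℝ => σ * x t θ ^ 2 * Ig t θ := by
    have : (fun θ : ℝ => σ * x t θ ^ 2 * Ig t θ) = fun θ => σ * X t θ ^ 2 * Ig t θ := by
      funext θ; rw [hXxt θ]
    rw [this]
    exact (continuous_const.mul ((hXcont.comp hcmt).pow 2)).mul (hIgcont.comp hcmt)
  have hxxθInt : IntervalIntegrable (fun θ => 2 * x t θ * xθ t θ) MeasureTheory.volume a b := by
    have heq2 : (fun θ : ℝ => 2 * x t θ * xθ t θ) = fun θ => 2 * X t θ ^ 2 * c t θ := by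
      funext θ
      rw [hB t htJ' θ, hceq t θ, hXxt θ]
      ring
    rw [heq2]
    exact (((continuous_const.mul ((hXcont.comp hcmt).pow 2))).mul
      (hccont.comp hcmt)).intervalIntegrable a b
  have hCle : Cv ≤ γ / 2 * x t b ^ 2 := by
    have h1 : Cv = ∫ θ in a..b,
        (γ / 2 * (2 * x t θ * xθ t θ) - σ * x t θ ^ 2 * Ig t θ) := by
      rw [hCv]
      apply intervalIntegral.integral_congr
      intro θ _
      exact hwc_id θ
    have h2 : (∫ θ in a..b, (γ / 2 * (2 * x t θ * xθ t θ) - σ * x t θ ^ 2 * Ig t θ))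
        = γ / 2 * (x t b ^ 2 - x t a ^ 2) - ∫ θ in a..b, σ * x t θ ^ 2 * Ig t θ := by
      rw [intervalIntegral.integral_sub (hxxθInt.const_mul (γ / 2))
        (hsIgcont.intervalIntegrable a b)]
      rw [intervalIntegral.integral_const_mul, hFTCx]
    have h3 : 0 ≤ ∫ θ in a..b, σ * x t θ ^ 2 * Ig t θ := by
      apply intervalIntegral.integral_nonneg hab.le
      intro θ hθ
      exact mul_nonneg (mul_nonneg hσ.le (sq_nonneg _)) (hIgnn θ)
    have h4 : 0 ≤ γ / 2 * x t a ^ 2 := by positivity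
    rw [h1, h2]
    linarith
  -- conclusion
  have hxb2 : 0 < x t b ^ 2 := pow_pos (hxpos t ht b) 2
  have hmain : 2 / γ * Bv ^ 2 / x t b ^ 2 ≤ Av := by
    rw [div_le_iff₀ hxb2]
    have h5 : Bv ^ 2 ≤ Av * (γ / 2 * x t b ^ 2) :=
      le_trans hCS (mul_le_mul_of_nonneg_left hCle hAnn)
    have h6 : 2 / γ * Bv ^ 2 ≤ 2 / γ * (Av * (γ / 2 * x t b ^ 2)) :=
      mul_le_mul_of_nonneg_left h5 (by positivity)
    have h7 : 2 / γ * (Av * (γ / 2 * x t b ^ 2)) = Av * x t b ^ 2 := by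
      field_simp
    linarith
  refine ⟨part1, ?_⟩
  rw [hsplit]
  linarith [hmain]
end

section
/- Let T ∈ (0,∞], let m ≠ 0 be a real number, let F : [0,T) → ℝ be continuous with F(t) > 0 for all t, and let ρ : [0,T) → ℝ be C² with ρ(t) > 0 for all t, ρ(0) = 1, and ρ''(t) = m²/(4ρ(t)³) + (1/2) F(t) ρ(t). Then for every t ∈ [0,T): ρ(t)² ≥ m²/(4ρ'(0)² + m²); equivalently, 1/ρ(t)² ≤ 1 + 4ρ'(0)²/m². -/
open Set

/-- lower bound on ρ for the Ermakov–Pinney-type equation with repulsive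
force, underlying the De Gregorio bound η_θ ≤ 1 + u₀'²/m₀². -/
theorem stmt_15 (T : EReal) (hT : 0 < T)
    (J : Set ℝ) (hJ : J = {t : ℝ | 0 ≤ t ∧ (t : EReal) < T})
    (m : ℝ) (hm : m ≠ 0)
    (F : ℝ → ℝ) (hFcont : ContinuousOn F J) (hFpos : ∀ t ∈ J, 0 < F t)
    (ρ ρ' : ℝ → ℝ)
    (hρpos : ∀ t ∈ J, 0 < ρ t) (hρ0 : ρ 0 = 1)
    (hρ : ∀ t ∈ J, HasDerivWithinAt ρ (ρ' t) J t)
    (hρ' : ∀ t ∈ J,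
      HasDerivWithinAt ρ' (m ^ 2 / (4 * ρ t ^ 3) + 1 / 2 * F t * ρ t) J t) :
    ∀ t ∈ J,
      m ^ 2 / (4 * ρ' 0 ^ 2 + m ^ 2) ≤ ρ t ^ 2 ∧
      1 / ρ t ^ 2 ≤ 1 + 4 * ρ' 0 ^ 2 / m ^ 2 := by
  have hm2 : (0:ℝ) < m ^ 2 := by positivity
  have hden : (0:ℝ) < 4 * ρ' 0 ^ 2 + m ^ 2 := by positivity
  have hsub : ∀ t₁ ∈ J, Icc (0:ℝ) t₁ ⊆ J := by
    intro t₁ ht₁ u hu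
    rw [hJ] at ht₁ ⊢
    exact ⟨hu.1, lt_of_le_of_lt (EReal.coe_le_coe_iff.mpr hu.2) ht₁.2⟩
  have hnhd : ∀ t₁ ∈ J, ∀ u : ℝ, 0 < u → u < t₁ → J ∈ nhds u := by
    intro t₁ ht₁ u hu0 hut
    have hss : Ioo (0:ℝ) t₁ ⊆ J := fun v hv => hsub t₁ ht₁ ⟨hv.1.le, hv.2.le⟩
    exact Filter.mem_of_superset (Ioo_mem_nhds hu0 hut) hss
  have hDρ : ∀ t₁ ∈ J, ∀ u ∈ Ioo (0:ℝ) t₁, HasDerivAt ρ (ρ' u) u := by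
    intro t₁ ht₁ u hu
    exact (hρ u (hsub t₁ ht₁ ⟨hu.1.le, hu.2.le⟩)).hasDerivAt (hnhd t₁ ht₁ u hu.1 hu.2)
  have hDρ' : ∀ t₁ ∈ J, ∀ u ∈ Ioo (0:ℝ) t₁,
      HasDerivAt ρ' (m ^ 2 / (4 * ρ u ^ 3) + 1 / 2 * F u * ρ u) u := by
    intro t₁ ht₁ u hu
    exact (hρ' u (hsub t₁ ht₁ ⟨hu.1.le, hu.2.le⟩)).hasDerivAt (hnhd t₁ ht₁ u hu.1 hu.2)
  have hρcont : ContinuousOn ρ J := fun u hu => (hρ u hu).continuousWithinAt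
  have hρ'cont : ContinuousOn ρ' J := fun u hu => (hρ' u hu).continuousWithinAt
  -- ρ' is monotone (convexity of ρ)
  have L2 : ∀ t₁ ∈ J, MonotoneOn ρ' (Icc 0 t₁) := by
    intro t₁ ht₁
    apply monotoneOn_of_deriv_nonneg (convex_Icc 0 t₁)
      (hρ'cont.mono (hsub t₁ ht₁))
    · rw [interior_Icc]
      intro u hu
      exact (hDρ' t₁ ht₁ u hu).differentiableAt.differentiableWithinAt
    · rw [interior_Icc]
      intro u hu
      have huJ := hsub t₁ ht₁ ⟨hu.1.le, hu.2.le⟩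
      rw [(hDρ' t₁ ht₁ u hu).deriv]
      have h1 := hρpos u huJ
      have h2 := hFpos u huJ
      positivity
  -- the energy
  set E : ℝ → ℝ := fun t => ρ' t ^ 2 + m ^ 2 / 4 * (ρ t ^ 2)⁻¹ with hEdef
  have hEderiv : ∀ t₁ ∈ J, ∀ u ∈ Ioo (0:ℝ) t₁,
      HasDerivAt E (ρ' u * F u * ρ u) u := by
    intro t₁ ht₁ u hu
    have huJ := hsub t₁ ht₁ ⟨hu.1.le, hu.2.le⟩
    have hρu : ρ u ≠ 0 := (hρpos u huJ).ne'
    have h1 := (hDρ' t₁ ht₁ u hu).pow 2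
    have h2 := (hDρ t₁ ht₁ u hu).pow 2
    have h3 := h2.inv (by positivity : ρ u ^ 2 ≠ 0)
    have h4 := h3.const_mul (m ^ 2 / 4)
    have h5 := h1.add h4
    refine h5.congr_deriv ?_
    simp only [Pi.pow_apply]
    field_simp
    ring
  have L1 : ∀ s ∈ J, (∀ u ∈ Icc (0:ℝ) s, ρ' u ≤ 0) →
      m ^ 2 / (4 * ρ' 0 ^ 2 + m ^ 2) ≤ ρ s ^ 2 := by
    intro s hs hneg
    have hs0 : (0:ℝ) ≤ s := by rw [hJ] at hs; exact hs.1
    have hEanti : AntitoneOn E (Icc 0 s) := by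
      apply antitoneOn_of_deriv_nonpos (convex_Icc 0 s)
      · apply ContinuousOn.add ((hρ'cont.mono (hsub s hs)).pow 2)
        apply continuousOn_const.mul
        apply ContinuousOn.inv₀ ((hρcont.mono (hsub s hs)).pow 2)
        intro u hu
        exact pow_ne_zero 2 (hρpos u (hsub s hs hu)).ne'
      · rw [interior_Icc]
        intro u hu
        exact (hEderiv s hs u hu).differentiableAt.differentiableWithinAt
      · rw [interior_Icc]
        intro u hu
        rw [(hEderiv s hs u hu).deriv]
        have huJ := hsub s hs ⟨hu.1.le, hu.2.le⟩
        have h1 : ρ' u ≤ 0 := hneg u ⟨hu.1.le, hu.2.le⟩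
        have h2 := hFpos u huJ
        have h3 := hρpos u huJ
        nlinarith [mul_nonneg h2.le h3.le]
    have hE0 : E s ≤ E 0 :=
      hEanti (left_mem_Icc.mpr hs0) (right_mem_Icc.mpr hs0) hs0
    have hE0v : E 0 = ρ' 0 ^ 2 + m ^ 2 / 4 := by simp [hEdef, hρ0]
    have hsq : (0:ℝ) < ρ s ^ 2 := pow_pos (hρpos s hs) 2
    have hE0' : ρ' s ^ 2 + m ^ 2 / 4 * (ρ s ^ 2)⁻¹ ≤ ρ' 0 ^ 2 + m ^ 2 / 4 := by
      have h := hE0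
      rw [hEdef] at h
      simpa [hρ0] using h
    have h6 : m ^ 2 / 4 * (ρ s ^ 2)⁻¹ ≤ ρ' 0 ^ 2 + m ^ 2 / 4 := by
      nlinarith [sq_nonneg (ρ' s), hE0']
    rw [← div_eq_mul_inv, div_le_iff₀ hsq] at h6
    rw [div_le_iff₀ hden]
    nlinarith [h6]
  have key : ∀ t ∈ J, m ^ 2 / (4 * ρ' 0 ^ 2 + m ^ 2) ≤ ρ t ^ 2 := by
    intro t₁ ht₁
    have ht₁0 : 0 ≤ t₁ := by rw [hJ] at ht₁; exact ht₁.1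
    rcases le_or_gt (ρ' t₁) 0 with h | h
    · exact L1 t₁ ht₁ (fun u hu =>
        le_trans (L2 t₁ ht₁ hu (right_mem_Icc.mpr ht₁0) hu.2) h)
    rcases le_or_gt 0 (ρ' 0) with h0 | h0
    · have hmono : MonotoneOn ρ (Icc 0 t₁) := by
        apply monotoneOn_of_deriv_nonneg (convex_Icc 0 t₁)
          (hρcont.mono (hsub t₁ ht₁))
        · rw [interior_Icc]
          intro u hu
          exact (hDρ t₁ ht₁ u hu).differentiableAt.differentiableWithinAt
        · rw [interior_Icc]
          intro u hu
          rw [(hDρ t₁ ht₁ u hu).deriv]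
          exact le_trans h0
            (L2 t₁ ht₁ (left_mem_Icc.mpr ht₁0) ⟨hu.1.le, hu.2.le⟩ hu.1.le)
      have h1 : (1:ℝ) ≤ ρ t₁ := by
        have := hmono (left_mem_Icc.mpr ht₁0) (right_mem_Icc.mpr ht₁0) ht₁0
        rwa [hρ0] at this
      have h2 : m ^ 2 / (4 * ρ' 0 ^ 2 + m ^ 2) ≤ 1 := by
        rw [div_le_one hden]; nlinarith [sq_nonneg (ρ' 0)]
      nlinarith
    · have hcont : ContinuousOn ρ' (Icc 0 t₁) := hρ'cont.mono (hsub t₁ ht₁)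
      have hmem : (0:ℝ) ∈ Icc (ρ' 0) (ρ' t₁) := ⟨h0.le, h.le⟩
      obtain ⟨s, hsmem, hsval⟩ := intermediate_value_Icc ht₁0 hcont hmem
      have hsJ : s ∈ J := hsub t₁ ht₁ hsmem
      have hcs : m ^ 2 / (4 * ρ' 0 ^ 2 + m ^ 2) ≤ ρ s ^ 2 := by
        apply L1 s hsJ
        intro u hu
        have hle : ρ' u ≤ ρ' s :=
          L2 t₁ ht₁ ⟨hu.1, le_trans hu.2 hsmem.2⟩ hsmem hu.2
        rw [hsval] at hle
        exact hle
      have hmono : MonotoneOn ρ (Icc s t₁) := by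
        apply monotoneOn_of_deriv_nonneg (convex_Icc s t₁)
          (hρcont.mono (fun u hu => hsub t₁ ht₁ ⟨le_trans hsmem.1 hu.1, hu.2⟩))
        · rw [interior_Icc]
          intro u hu
          have hu' : u ∈ Ioo (0:ℝ) t₁ := ⟨lt_of_le_of_lt hsmem.1 hu.1, hu.2⟩
          exact (hDρ t₁ ht₁ u hu').differentiableAt.differentiableWithinAt
        · rw [interior_Icc]
          intro u hu
          have hu' : u ∈ Ioo (0:ℝ) t₁ := ⟨lt_of_le_of_lt hsmem.1 hu.1, hu.2⟩
          rw [(hDρ t₁ ht₁ u hu').deriv]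
          have hle : ρ' s ≤ ρ' u :=
            L2 t₁ ht₁ hsmem ⟨le_trans hsmem.1 hu.1.le, hu.2.le⟩ hu.1.le
          rw [hsval] at hle
          exact hle
      have hst : ρ s ≤ ρ t₁ :=
        hmono (left_mem_Icc.mpr hsmem.2) (right_mem_Icc.mpr hsmem.2) hsmem.2
      have hρs : 0 < ρ s := hρpos s hsJ
      nlinarith [hcs, hst, hρs]
  intro t ht
  refine ⟨key t ht, ?_⟩
  have hc : 0 < m ^ 2 / (4 * ρ' 0 ^ 2 + m ^ 2) := div_pos hm2 hden
  have h1 : 1 / ρ t ^ 2 ≤ 1 / (m ^ 2 / (4 * ρ' 0 ^ 2 + m ^ 2)) :=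
    one_div_le_one_div_of_le hc (key t ht)
  rw [one_div_div] at h1
  have h2 : (4 * ρ' 0 ^ 2 + m ^ 2) / m ^ 2 = 1 + 4 * ρ' 0 ^ 2 / m ^ 2 := by
    rw [add_div, div_self (ne_of_gt hm2)]
    ring
  rw [h2] at h1
  exact h1
end

section
/- Let σ ∈ ℝ and let η, V : ℝ → ℝ be C¹ functions with η(θ+1) = η(θ) + 1, η'(θ) ≥ 0 for all θ, and V(θ+1) = V(θ). Let P : ℝ → ℝ be a C¹ 1-periodic function satisfying P'(θ) = (V(θ) − σ) η'(θ) for all θ and ∫₀¹ P(θ) η'(θ) dθ = 0. Then sup_{θ∈ℝ} |P(θ)| ≤ √( ∫₀¹ (V(θ) − σ)² η'(θ) dθ ). -/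
open Set

/-- uniform bound on the Lagrangian pressure for the μDP equation. -/
theorem stmt_16 (σ : ℝ) (η V P : ℝ → ℝ)
    (hη : ContDiff ℝ 1 η) (hV : ContDiff ℝ 1 V) (hP : ContDiff ℝ 1 P)
    (hηper : ∀ θ : ℝ, η (θ + 1) = η θ + 1)
    (hη' : ∀ θ : ℝ, 0 ≤ deriv η θ)
    (hVper : ∀ θ : ℝ, V (θ + 1) = V θ)
    (hPper : ∀ θ : ℝ, P (θ + 1) = P θ)
    (hP' : ∀ θ : ℝ, deriv P θ = (V θ - σ) * deriv η θ)
    (hPint : (∫ θ in (0:ℝ)..1, P θ * deriv η θ) = 0) :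
    ∀ θ : ℝ, |P θ| ≤ Real.sqrt (∫ θ in (0:ℝ)..1, (V θ - σ) ^ 2 * deriv η θ) := by
  have hηd : Differentiable ℝ η := hη.differentiable one_ne_zero
  have hPd : Differentiable ℝ P := hP.differentiable one_ne_zero
  have hη'c : Continuous (deriv η) := hη.continuous_deriv le_rfl
  have hP'c : Continuous (deriv P) := hP.continuous_deriv le_rfl
  have hVc : Continuous V := hV.continuous
  have hPc : Continuous P := hP.continuous
  -- periodicity of deriv η
  have hη'per : Function.Periodic (deriv η) 1 := by
    intro x
    have h1 : deriv (fun y => η (y + 1)) x = deriv η (x + 1) := by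
      simpa using deriv_comp_add_const η 1 x
    have h2 : (fun y => η (y + 1)) = fun y => η y + 1 := funext hηper
    rw [h2] at h1
    simpa using h1.symm
  have hPper' : Function.Periodic P 1 := hPper
  -- ∫₀¹ η' = 1
  have hη'int : (∫ θ in (0:ℝ)..1, deriv η θ) = 1 := by
    rw [intervalIntegral.integral_deriv_eq_sub (fun x _ => hηd x)
      (hη'c.intervalIntegrable 0 1)]
    have h0 := hηper 0
    simp only [zero_add] at h0
    rw [h0]; ring
  -- existence of a zero of P
  obtain ⟨a, ha, hamin⟩ := isCompact_Icc.exists_isMinOn (nonempty_Icc.2 zero_le_one)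
    (hPc.continuousOn : ContinuousOn P (Icc (0:ℝ) 1))
  obtain ⟨b, hb, hbmax⟩ := isCompact_Icc.exists_isMaxOn (nonempty_Icc.2 zero_le_one)
    (hPc.continuousOn : ContinuousOn P (Icc (0:ℝ) 1))
  have hPa : P a ≤ 0 := by
    have hmono : (∫ θ in (0:ℝ)..1, P a * deriv η θ) ≤ ∫ θ in (0:ℝ)..1, P θ * deriv η θ := by
      apply intervalIntegral.integral_mono_on zero_le_one
      · exact (continuous_const.mul hη'c).intervalIntegrable 0 1
      · exact (hPc.mul hη'c).intervalIntegrable 0 1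
      · intro θ hθ; exact mul_le_mul_of_nonneg_right (hamin hθ) (hη' θ)
    rw [hPint, intervalIntegral.integral_const_mul, hη'int, mul_one] at hmono
    exact hmono
  have hPb : 0 ≤ P b := by
    have hmono : (∫ θ in (0:ℝ)..1, P θ * deriv η θ) ≤ ∫ θ in (0:ℝ)..1, P b * deriv η θ := by
      apply intervalIntegral.integral_mono_on zero_le_one
      · exact (hPc.mul hη'c).intervalIntegrable 0 1
      · exact (continuous_const.mul hη'c).intervalIntegrable 0 1
      · intro θ hθ; exact mul_le_mul_of_nonneg_right (hbmax hθ) (hη' θ)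
    rw [hPint, intervalIntegral.integral_const_mul, hη'int, mul_one] at hmono
    exact hmono
  have hzero : ∃ θ₀ : ℝ, P θ₀ = 0 := by
    have := intermediate_value_uIcc (hPc.continuousOn : ContinuousOn P (uIcc a b))
    have h0 : (0:ℝ) ∈ uIcc (P a) (P b) := by
      rw [Set.mem_uIcc]; exact Or.inl ⟨hPa, hPb⟩
    obtain ⟨θ₀, _, hθ₀⟩ := this h0
    exact ⟨θ₀, hθ₀⟩
  obtain ⟨θ₀, hθ₀⟩ := hzero
  -- the nonnegative integrand |V - σ| η' and its integral B
  set A : ℝ := ∫ θ in (0:ℝ)..1, (V θ - σ) ^ 2 * deriv η θ with hA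
  set B : ℝ := ∫ θ in (0:ℝ)..1, |V θ - σ| * deriv η θ with hB
  have hA0 : 0 ≤ A := by
    apply intervalIntegral.integral_nonneg zero_le_one
    intro θ _; exact mul_nonneg (sq_nonneg _) (hη' θ)
  have hB0 : ∀ t : ℝ, 0 < t → B ≤ (t * A + 1 / t) / 2 := by
    intro t ht
    have heq : (∫ θ in (0:ℝ)..1, (t / 2) * ((V θ - σ) ^ 2 * deriv η θ) + (1 / (2 * t)) * deriv η θ)
        = (t * A + 1 / t) / 2 := by
      rw [intervalIntegral.integral_add, intervalIntegral.integral_const_mul,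
        intervalIntegral.integral_const_mul, hη'int]
      · field_simp; ring
      · exact (continuous_const.mul (((hVc.sub continuous_const).pow 2).mul hη'c)).intervalIntegrable 0 1
      · exact (continuous_const.mul hη'c).intervalIntegrable 0 1
    rw [hB, ← heq]
    apply intervalIntegral.integral_mono_on zero_le_one
    · exact ((hVc.sub continuous_const).abs.mul hη'c).intervalIntegrable 0 1
    · exact ((continuous_const.mul (((hVc.sub continuous_const).pow 2).mul hη'c)).add
        (continuous_const.mul hη'c)).intervalIntegrable 0 1
    · intro θ _
      have key : 2 * t * |V θ - σ| ≤ t ^ 2 * (V θ - σ) ^ 2 + 1 := by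
        nlinarith [sq_nonneg (t * |V θ - σ| - 1), sq_abs (V θ - σ)]
      have hx : |V θ - σ| ≤ t / 2 * (V θ - σ) ^ 2 + 1 / (2 * t) := by
        rw [← sub_nonneg]
        have hrw : t / 2 * (V θ - σ) ^ 2 + 1 / (2 * t) - |V θ - σ|
            = (t ^ 2 * (V θ - σ) ^ 2 + 1 - 2 * t * |V θ - σ|) / (2 * t) := by
          field_simp
        rw [hrw]
        exact div_nonneg (by linarith) (by positivity)
      calc |V θ - σ| * deriv η θ
          ≤ (t / 2 * (V θ - σ) ^ 2 + 1 / (2 * t)) * deriv η θ :=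
            mul_le_mul_of_nonneg_right hx (hη' θ)
        _ = t / 2 * ((V θ - σ) ^ 2 * deriv η θ) + 1 / (2 * t) * deriv η θ := by ring
  have hBA : B ≤ Real.sqrt A := by
    rcases eq_or_lt_of_le hA0 with h | h
    · have : B ≤ 0 := by
        by_contra hc
        push_neg at hc
        have := hB0 (1 / B) (by positivity)
        rw [← h] at this
        simp at this
        nlinarith
      simpa [← h] using this.trans (Real.sqrt_nonneg A)
    · have hs : 0 < Real.sqrt A := Real.sqrt_pos.2 h
      have := hB0 (1 / Real.sqrt A) (by positivity)
      have hdiv : A / Real.sqrt A = Real.sqrt A := Real.div_sqrt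
      calc B ≤ ((1 / Real.sqrt A) * A + 1 / (1 / Real.sqrt A)) / 2 := this
        _ = (A / Real.sqrt A + Real.sqrt A) / 2 := by rw [one_div_one_div]; ring
        _ = Real.sqrt A := by rw [hdiv]; ring
  -- the key pointwise bound
  intro θ
  -- reduce to θ' ∈ [θ₀, θ₀ + 1]
  set θ' : ℝ := θ₀ + Int.fract (θ - θ₀) with hθ'
  have hPθ' : P θ' = P θ := by
    have : θ' = θ - (⌊θ - θ₀⌋ : ℝ) * 1 := by
      rw [hθ', Int.fract]; ring
    rw [this, hPper'.sub_int_mul_eq ⌊θ - θ₀⌋]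
  have h1 : θ₀ ≤ θ' := le_add_of_nonneg_right (Int.fract_nonneg _)
  have h2 : θ' ≤ θ₀ + 1 := by
    have := (Int.fract_lt_one (θ - θ₀)).le
    linarith
  -- FTC
  have hftc : P θ' - P θ₀ = ∫ x in θ₀..θ', deriv P x :=
    (intervalIntegral.integral_deriv_eq_sub (fun x _ => hPd x)
      (hP'c.intervalIntegrable _ _)).symm
  have habs : |P θ'| ≤ ∫ x in θ₀..θ', |deriv P x| := by
    calc |P θ'| = |P θ' - P θ₀| := by rw [hθ₀]; ring_nf
      _ = |∫ x in θ₀..θ', deriv P x| := by rw [hftc]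
      _ ≤ ∫ x in θ₀..θ', |deriv P x| :=
        intervalIntegral.abs_integral_le_integral_abs h1
  have hmono2 : (∫ x in θ₀..θ', |deriv P x|) ≤ ∫ x in θ₀..θ₀ + 1, |deriv P x| := by
    apply intervalIntegral.integral_mono_interval le_rfl h1 h2
    · filter_upwards with x using abs_nonneg _
    · exact hP'c.abs.intervalIntegrable _ _
  have hperint : (∫ x in θ₀..θ₀ + 1, |deriv P x|) = ∫ x in (0:ℝ)..0 + 1, |deriv P x| := by
    have hper : Function.Periodic (fun x => |deriv P x|) 1 := by
      intro x
      simp only [hP' (x + 1), hP' x, hVper x, hη'per x]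
    exact hper.intervalIntegral_add_eq θ₀ 0
  have hBeq : (∫ x in (0:ℝ)..0 + 1, |deriv P x|) = B := by
    rw [zero_add, hB]
    apply intervalIntegral.integral_congr
    intro x _
    simp only [hP' x, abs_mul, abs_of_nonneg (hη' x)]
  calc |P θ| = |P θ'| := by rw [hPθ']
    _ ≤ ∫ x in θ₀..θ', |deriv P x| := habs
    _ ≤ ∫ x in θ₀..θ₀ + 1, |deriv P x| := hmono2
    _ = B := by rw [hperint, hBeq]
    _ ≤ Real.sqrt A := hBA
end

section
/- Let t₁ < t₂, let F : [t₁,t₂] → ℝ be continuous, and let x, y : [t₁,t₂] → ℝ be C² with x'' = Fx and y'' = Fy. Set r(t) = √(x(t)² + y(t)²), assume r(t) > 0 and r'(t) ≤ 0 for all t ∈ [t₁,t₂], let ω₀ = x y' − y x' (which is constant on [t₁,t₂]), and let F̄ = max{ −inf_{t∈[t₁,t₂]} F(t), 0 }. Then r(t₂) ≥ |ω₀| r(t₁) / √( r(t₁)² r'(t₁)² + ω₀² + F̄ r(t₁)⁴ ). -/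
open Set

/-- quantitative lower bound for the radius of a planar central-force
system over an interval where the radius is nonincreasing. -/
theorem stmt_18 (t₁ t₂ : ℝ) (h12 : t₁ < t₂)
    (F : ℝ → ℝ) (hF : ContinuousOn F (Icc t₁ t₂))
    (x y x' y' : ℝ → ℝ)
    (hx : ∀ t ∈ Icc t₁ t₂, HasDerivWithinAt x (x' t) (Icc t₁ t₂) t)
    (hx' : ∀ t ∈ Icc t₁ t₂, HasDerivWithinAt x' (F t * x t) (Icc t₁ t₂) t)
    (hy : ∀ t ∈ Icc t₁ t₂, HasDerivWithinAt y (y' t) (Icc t₁ t₂) t)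
    (hy' : ∀ t ∈ Icc t₁ t₂, HasDerivWithinAt y' (F t * y t) (Icc t₁ t₂) t)
    (hrpos : ∀ t ∈ Icc t₁ t₂, 0 < x t ^ 2 + y t ^ 2)
    -- r' ≤ 0, expressed via r r' = x x' + y y' and r > 0
    (hrdec : ∀ t ∈ Icc t₁ t₂, x t * x' t + y t * y' t ≤ 0) :
    Real.sqrt (x t₂ ^ 2 + y t₂ ^ 2) ≥
      |x t₁ * y' t₁ - y t₁ * x' t₁| * Real.sqrt (x t₁ ^ 2 + y t₁ ^ 2) /
        Real.sqrt ((x t₁ * x' t₁ + y t₁ * y' t₁) ^ 2 + (x t₁ * y' t₁ - y t₁ * x' t₁) ^ 2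
          + max (-(sInf (F '' Icc t₁ t₂))) 0 * (x t₁ ^ 2 + y t₁ ^ 2) ^ 2) := by
  have ht1 : t₁ ∈ Icc t₁ t₂ := left_mem_Icc.mpr h12.le
  have ht2 : t₂ ∈ Icc t₁ t₂ := right_mem_Icc.mpr h12.le
  set Fb := max (-(sInf (F '' Icc t₁ t₂))) 0 with hFbdef
  have hFb0 : 0 ≤ Fb := le_max_right _ _
  have hbdd : BddBelow (F '' Icc t₁ t₂) :=
    (isCompact_Icc.image_of_continuousOn hF).bddBelow
  have hFge : ∀ t ∈ Icc t₁ t₂, 0 ≤ F t + Fb := by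
    intro t ht
    have h1 : sInf (F '' Icc t₁ t₂) ≤ F t := csInf_le hbdd ⟨t, ht, rfl⟩
    have h2 : -(sInf (F '' Icc t₁ t₂)) ≤ Fb := le_max_left _ _
    linarith
  -- angular momentum is constant
  set w : ℝ → ℝ := fun t => x t * y' t - y t * x' t with hwdef
  have hwd : ∀ t ∈ Icc t₁ t₂, HasDerivWithinAt w 0 (Icc t₁ t₂) t := by
    intro t ht
    have h := ((hx t ht).mul (hy' t ht)).sub ((hy t ht).mul (hx' t ht))
    refine h.congr_deriv ?_
    ring
  have hwconst : w t₂ = w t₁ := by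
    have hdiff : DifferentiableOn ℝ w (Icc t₁ t₂) :=
      fun t ht => (hwd t ht).differentiableWithinAt
    refine constant_of_derivWithin_zero hdiff ?_ t₂ ht2
    intro t ht
    have ht' : t ∈ Icc t₁ t₂ := Ico_subset_Icc_self ht
    exact (hwd t ht').derivWithin ((uniqueDiffOn_Icc h12) t ht')
  -- energy-like quantity g is nonincreasing
  set g : ℝ → ℝ := fun t =>
    x' t * x' t + y' t * y' t + Fb * (x t * x t + y t * y t) with hgdef
  have hgd : ∀ t ∈ Icc t₁ t₂,
      HasDerivWithinAt g (2 * (F t + Fb) * (x t * x' t + y t * y' t)) (Icc t₁ t₂) t := by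
    intro t ht
    have h := (((hx' t ht).mul (hx' t ht)).add ((hy' t ht).mul (hy' t ht))).add
      ((((hx t ht).mul (hx t ht)).add ((hy t ht).mul (hy t ht))).const_mul Fb)
    refine h.congr_deriv ?_
    ring
  have hgant : AntitoneOn g (Icc t₁ t₂) := by
    apply antitoneOn_of_deriv_nonpos (convex_Icc t₁ t₂)
    · exact fun t ht => (hgd t ht).continuousWithinAt
    · intro t ht
      rw [interior_Icc] at ht
      exact (((hgd t (Ioo_subset_Icc_self ht)).hasDerivAt
        (Icc_mem_nhds ht.1 ht.2)).differentiableAt).differentiableWithinAt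
    · intro t ht
      rw [interior_Icc] at ht
      have ht' : t ∈ Icc t₁ t₂ := Ioo_subset_Icc_self ht
      rw [((hgd t ht').hasDerivAt (Icc_mem_nhds ht.1 ht.2)).deriv]
      exact mul_nonpos_of_nonneg_of_nonpos (by have := hFge t ht'; linarith) (hrdec t ht')
  have hgle : g t₂ ≤ g t₁ := hgant ht1 ht2 h12.le
  -- key inequality
  have hLag2 : w t₂ ^ 2 + (x t₂ * x' t₂ + y t₂ * y' t₂) ^ 2
      = (x t₂ ^ 2 + y t₂ ^ 2) * (x' t₂ * x' t₂ + y' t₂ * y' t₂) := by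
    simp only [hwdef]; ring
  have hkey : w t₁ ^ 2 * (x t₁ ^ 2 + y t₁ ^ 2) ≤ (x t₂ ^ 2 + y t₂ ^ 2) *
      ((x t₁ * x' t₁ + y t₁ * y' t₁) ^ 2 + (x t₁ * y' t₁ - y t₁ * x' t₁) ^ 2
        + Fb * (x t₁ ^ 2 + y t₁ ^ 2) ^ 2) := by
    have h1 : w t₁ ^ 2 ≤ (x t₂ ^ 2 + y t₂ ^ 2) * g t₂ := by
      rw [← hwconst]
      have h2 : w t₂ ^ 2 ≤ (x t₂ ^ 2 + y t₂ ^ 2) * (x' t₂ * x' t₂ + y' t₂ * y' t₂) := by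
        nlinarith [sq_nonneg (x t₂ * x' t₂ + y t₂ * y' t₂)]
      have h3 : (x t₂ ^ 2 + y t₂ ^ 2) * (x' t₂ * x' t₂ + y' t₂ * y' t₂)
          ≤ (x t₂ ^ 2 + y t₂ ^ 2) * g t₂ := by
        apply mul_le_mul_of_nonneg_left _ (hrpos t₂ ht2).le
        simp only [hgdef]
        nlinarith [mul_nonneg hFb0 (hrpos t₂ ht2).le]
      linarith
    have h4 : (x t₂ ^ 2 + y t₂ ^ 2) * g t₂ ≤ (x t₂ ^ 2 + y t₂ ^ 2) * g t₁ :=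
      mul_le_mul_of_nonneg_left hgle (hrpos t₂ ht2).le
    have h5 : (x t₁ ^ 2 + y t₁ ^ 2) * g t₁ =
        (x t₁ * x' t₁ + y t₁ * y' t₁) ^ 2 + (x t₁ * y' t₁ - y t₁ * x' t₁) ^ 2
          + Fb * (x t₁ ^ 2 + y t₁ ^ 2) ^ 2 := by
      simp only [hgdef]; ring
    -- w t₁ ^2 * r₁² ≤ r₂² g t₁ * r₁² = r₂² * D
    have h6 : w t₁ ^ 2 * (x t₁ ^ 2 + y t₁ ^ 2)
        ≤ (x t₂ ^ 2 + y t₂ ^ 2) * g t₁ * (x t₁ ^ 2 + y t₁ ^ 2) := by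
      have := (hrpos t₁ ht1).le
      nlinarith
    calc w t₁ ^ 2 * (x t₁ ^ 2 + y t₁ ^ 2)
        ≤ (x t₂ ^ 2 + y t₂ ^ 2) * g t₁ * (x t₁ ^ 2 + y t₁ ^ 2) := h6
      _ = (x t₂ ^ 2 + y t₂ ^ 2) * ((x t₁ ^ 2 + y t₁ ^ 2) * g t₁) := by ring
      _ = _ := by rw [h5]
  -- conclude
  set D := (x t₁ * x' t₁ + y t₁ * y' t₁) ^ 2 + (x t₁ * y' t₁ - y t₁ * x' t₁) ^ 2
      + Fb * (x t₁ ^ 2 + y t₁ ^ 2) ^ 2 with hDdef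
  have hD0 : 0 ≤ D := by
    have := mul_nonneg hFb0 (sq_nonneg (x t₁ ^ 2 + y t₁ ^ 2))
    positivity
  rcases hD0.eq_or_lt with h | hDpos
  · rw [← h, Real.sqrt_zero, div_zero]
    exact Real.sqrt_nonneg _
  · rw [ge_iff_le, div_le_iff₀ (Real.sqrt_pos.mpr hDpos)]
    have habs : |x t₁ * y' t₁ - y t₁ * x' t₁| = Real.sqrt (w t₁ ^ 2) := by
      rw [Real.sqrt_sq_eq_abs]
    rw [habs, ← Real.sqrt_mul (sq_nonneg _), ← Real.sqrt_mul (by positivity)]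
    exact Real.sqrt_le_sqrt hkey
end

section
/- Let T ∈ (0,∞] and let u : [0,T) × S¹ → ℝ be C³ in θ and C¹ in t (with continuous mixed partial derivatives) solving the μ-Degasperis–Procesi equation, i.e., the μ-λ equation with λ = 3 and momentum m = μ(u) − u_θθ. Let σ = ∫₀¹ u(t,θ) dθ (which is constant in t), and for each t let Q(t,·) be the unique C¹ 1-periodic function with Q_θ(t,θ) = u(t,θ) − σ and ∫₀¹ Q(t,θ) dθ = 0. Then u_t + u u_θ = 3σ Q on [0,T) × S¹. -/
open Set

namespace Stmt19

open MeasureTheory intervalIntegral Filter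

variable {J : Set ℝ}

lemma cont_slice {h : ℝ → ℝ → ℝ}
    (hc : ContinuousOn (fun p : ℝ × ℝ => h p.1 p.2) (J ×ˢ univ)) {x : ℝ} (hx : x ∈ J) :
    Continuous (h x) := by
  rw [← continuousOn_univ]
  exact hc.comp (Continuous.continuousOn (continuous_const.prodMk continuous_id))
    (fun θ _ => ⟨hx, mem_univ θ⟩)

lemma cont_tslice {h : ℝ → ℝ → ℝ}
    (hc : ContinuousOn (fun p : ℝ × ℝ => h p.1 p.2) (J ×ˢ univ)) (θ : ℝ) :
    ContinuousOn (fun s => h s θ) J :=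
  hc.comp (Continuous.continuousOn (continuous_id.prodMk continuous_const))
    (fun s hs => ⟨hs, mem_univ θ⟩)

/-- FTC-2 in time. -/
lemma ftc_t {f f' : ℝ → ℝ} (hd : ∀ s ∈ J, HasDerivWithinAt f (f' s) J s)
    (hc : ContinuousOn f' J) {t : ℝ} (ht0 : 0 ≤ t) (hsub : Icc 0 t ⊆ J) :
    ∫ s in (0:ℝ)..t, f' s = f t - f 0 := by
  apply intervalIntegral.integral_eq_sub_of_hasDeriv_right_of_le ht0
  · intro x hx
    exact ((hd x (hsub hx)).continuousWithinAt).mono hsub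
  · intro x hx
    have hJx : J ∈ nhds x :=
      mem_nhds_iff.2 ⟨Ioo 0 t, (Ioo_subset_Icc_self).trans hsub, isOpen_Ioo, hx⟩
    exact ((hd x (hsub (Ioo_subset_Icc_self hx))).hasDerivAt hJx).hasDerivWithinAt
  · have : ContinuousOn f' (uIcc 0 t) := by
      rw [uIcc_of_le ht0]; exact hc.mono hsub
    exact this.intervalIntegrable

/-- Continuity in the parameter of an interval integral. -/
lemma param_cont (hpos : ∀ x ∈ J, 0 ≤ x) {h : ℝ → ℝ → ℝ}
    (hc : ContinuousOn (fun p : ℝ × ℝ => h p.1 p.2) (J ×ˢ univ)) (a b : ℝ)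
    {t₁ t₂ : ℝ} (ht₁ : t₁ ∈ J) (h12 : t₁ < t₂) (hsub : Icc 0 t₂ ⊆ J) :
    ContinuousWithinAt (fun s => ∫ φ in a..b, h s φ) J t₁ := by
  obtain ⟨C, hC⟩ := (isCompact_Icc.prod isCompact_uIcc).exists_bound_of_continuousOn
    (hc.mono (prod_mono hsub (subset_univ _)))
  have hev : ∀ᶠ x in nhdsWithin t₁ J, x ∈ Icc 0 t₂ := by
    have h1 : Iio t₂ ∈ nhdsWithin t₁ J := nhdsWithin_le_nhds (Iio_mem_nhds h12)
    filter_upwards [h1, self_mem_nhdsWithin] with x hx hxJ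
    exact ⟨hpos x hxJ, le_of_lt hx⟩
  apply intervalIntegral.continuousWithinAt_of_dominated_interval (bound := fun _ => C)
  · filter_upwards [self_mem_nhdsWithin] with x hxJ
    exact (cont_slice hc hxJ).aestronglyMeasurable
  · filter_upwards [hev] with x hx
    refine Eventually.of_forall fun φ hφ => ?_
    exact hC (x, φ) ⟨hx, uIoc_subset_uIcc hφ⟩
  · exact intervalIntegrable_const
  · refine Eventually.of_forall fun φ _ => ?_
    exact (cont_tslice hc φ) t₁ ht₁

/-- Fubini for continuous integrands on a rectangle. -/
lemma fubini {h : ℝ → ℝ → ℝ}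
    (hc : ContinuousOn (fun p : ℝ × ℝ => h p.1 p.2) (J ×ˢ univ))
    {t : ℝ} (ht0 : 0 ≤ t) (hsub : Icc 0 t ⊆ J) {c d : ℝ} (hcd : c ≤ d) :
    ∫ s in (0:ℝ)..t, (∫ φ in c..d, h s φ) = ∫ φ in c..d, (∫ s in (0:ℝ)..t, h s φ) := by
  have hint : IntegrableOn (fun p : ℝ × ℝ => h p.1 p.2) (Icc 0 t ×ˢ Icc c d) volume :=
    (hc.mono (prod_mono hsub (subset_univ _))).integrableOn_compact
      (isCompact_Icc.prod isCompact_Icc)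
  have hint2 : Integrable (Function.uncurry h)
      ((volume.restrict (Ioc 0 t)).prod (volume.restrict (Ioc c d))) := by
    rw [Measure.prod_restrict, ← Measure.volume_eq_prod]
    exact hint.mono_set (prod_mono Ioc_subset_Icc_self Ioc_subset_Icc_self)
  rw [intervalIntegral.integral_of_le ht0, intervalIntegral.integral_of_le hcd]
  simp_rw [intervalIntegral.integral_of_le hcd, intervalIntegral.integral_of_le ht0]
  exact MeasureTheory.integral_integral_swap hint2

/-- If a continuous function has vanishing primitive on J, it vanishes. -/
lemma vanish {f : ℝ → ℝ} (hc : ContinuousOn f J)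
    (hint : ∀ r ∈ J, (∫ s in (0:ℝ)..r, f s) = 0)
    {t₁ t₂ : ℝ} (ht₁ : t₁ ∈ J) (h01 : 0 ≤ t₁) (h12 : t₁ < t₂) (hsub : Icc 0 t₂ ⊆ J) :
    f t₁ = 0 := by
  have h02 : (0:ℝ) < t₂ := lt_of_le_of_lt h01 h12
  have hmem : t₁ ∈ Icc (0:ℝ) t₂ := ⟨h01, h12.le⟩
  haveI : Fact (t₁ ∈ Icc (0:ℝ) t₂) := ⟨hmem⟩
  have hf1 : IntervalIntegrable f volume 0 t₁ := by
    have : ContinuousOn f (uIcc 0 t₁) := by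
      rw [uIcc_of_le h01]; exact hc.mono ((Icc_subset_Icc le_rfl h12.le).trans hsub)
    exact this.intervalIntegrable
  have hmeas : StronglyMeasurableAtFilter f (nhdsWithin t₁ (Icc 0 t₂)) :=
    ⟨Icc 0 t₂, self_mem_nhdsWithin, (hc.mono hsub).aestronglyMeasurable measurableSet_Icc⟩
  have hd1 : HasDerivWithinAt (fun u => ∫ s in (0:ℝ)..u, f s) (f t₁) (Icc 0 t₂) t₁ :=
    intervalIntegral.integral_hasDerivWithinAt_right hf1 hmeas ((hc.mono hsub) t₁ hmem)
  have hd2 : HasDerivWithinAt (fun u => ∫ s in (0:ℝ)..u, f s) 0 (Icc 0 t₂) t₁ := by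
    have h0 : HasDerivWithinAt (fun _ : ℝ => (0:ℝ)) 0 (Icc 0 t₂) t₁ := hasDerivWithinAt_const _ _ _
    exact h0.congr (fun y hy => hint y (hsub hy)) (hint t₁ ht₁)
  exact (hd1.derivWithin ((uniqueDiffOn_Icc h02) t₁ hmem)).symm.trans
    (hd2.derivWithin ((uniqueDiffOn_Icc h02) t₁ hmem))

lemma clairaut {v vθ vt vtθ : ℝ → ℝ → ℝ}
    (h0J : (0:ℝ) ∈ J) (hpos : ∀ x ∈ J, 0 ≤ x)
    (hIccJ : ∀ t ∈ J, Icc 0 t ⊆ J) (hgt : ∀ t ∈ J, ∃ t₂ ∈ J, t < t₂)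
    (hv : ∀ t ∈ J, ∀ θ : ℝ, HasDerivAt (v t) (vθ t θ) θ)
    (hvθcont : ∀ t ∈ J, Continuous (vθ t))
    (hvt : ∀ θ : ℝ, ∀ t ∈ J, HasDerivWithinAt (fun s => v s θ) (vt t θ) J t)
    (hvθt : ∀ θ : ℝ, ∀ t ∈ J, HasDerivWithinAt (fun s => vθ s θ) (vtθ t θ) J t)
    (hvtc : ContinuousOn (fun p : ℝ × ℝ => vt p.1 p.2) (J ×ˢ univ))
    (hvtθc : ContinuousOn (fun p : ℝ × ℝ => vtθ p.1 p.2) (J ×ˢ univ)) :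
    ∀ t ∈ J, ∀ θ : ℝ, vt t θ = vt t 0 + ∫ φ in (0:ℝ)..θ, vtθ t φ := by
  intro t ht θ
  have hparam : ContinuousOn (fun s => ∫ φ in (0:ℝ)..θ, vtθ s φ) J := by
    intro x hx
    obtain ⟨t₂, ht₂, hlt⟩ := hgt x hx
    exact param_cont hpos hvtθc 0 θ hx hlt (hIccJ t₂ ht₂)
  have hfc : ContinuousOn (fun s => vt s θ - vt s 0 - ∫ φ in (0:ℝ)..θ, vtθ s φ) J :=
    fun x hx => (((cont_tslice hvtc θ) x hx).sub ((cont_tslice hvtc 0) x hx)).sub (hparam x hx)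
  have key : ∀ r ∈ J, (∫ s in (0:ℝ)..r,
      (vt s θ - vt s 0 - ∫ φ in (0:ℝ)..θ, vtθ s φ)) = 0 := by
    intro r hr
    have hr0 : 0 ≤ r := hpos r hr
    have hsub := hIccJ r hr
    have ia : IntervalIntegrable (fun s => vt s θ) volume 0 r := by
      have : ContinuousOn (fun s => vt s θ) (uIcc 0 r) := by
        rw [uIcc_of_le hr0]; exact (cont_tslice hvtc θ).mono hsub
      exact this.intervalIntegrable
    have ib : IntervalIntegrable (fun s => vt s 0) volume 0 r := by
      have : ContinuousOn (fun s => vt s 0) (uIcc 0 r) := by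
        rw [uIcc_of_le hr0]; exact (cont_tslice hvtc 0).mono hsub
      exact this.intervalIntegrable
    have ic : IntervalIntegrable (fun s => ∫ φ in (0:ℝ)..θ, vtθ s φ) volume 0 r := by
      have : ContinuousOn (fun s => ∫ φ in (0:ℝ)..θ, vtθ s φ) (uIcc 0 r) := by
        rw [uIcc_of_le hr0]; exact hparam.mono hsub
      exact this.intervalIntegrable
    have i1 : (∫ s in (0:ℝ)..r, vt s θ) = v r θ - v 0 θ :=
      ftc_t (fun s hs => hvt θ s hs) (cont_tslice hvtc θ) hr0 hsub
    have i2 : (∫ s in (0:ℝ)..r, vt s 0) = v r 0 - v 0 0 :=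
      ftc_t (fun s hs => hvt 0 s hs) (cont_tslice hvtc 0) hr0 hsub
    have swap : (∫ s in (0:ℝ)..r, (∫ φ in (0:ℝ)..θ, vtθ s φ))
        = ∫ φ in (0:ℝ)..θ, (∫ s in (0:ℝ)..r, vtθ s φ) := by
      rcases le_total 0 θ with hθ | hθ
      · exact fubini hvtθc hr0 hsub hθ
      · simp_rw [intervalIntegral.integral_symm θ 0, intervalIntegral.integral_neg]
        exact congrArg Neg.neg (fubini hvtθc hr0 hsub hθ)
    have inner : ∀ φ : ℝ, (∫ s in (0:ℝ)..r, vtθ s φ) = vθ r φ - vθ 0 φ := fun φ =>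
      ftc_t (fun s hs => hvθt φ s hs) (cont_tslice hvtθc φ) hr0 hsub
    have i3 : (∫ s in (0:ℝ)..r, (∫ φ in (0:ℝ)..θ, vtθ s φ))
        = (v r θ - v r 0) - (v 0 θ - v 0 0) := by
      rw [swap]
      rw [intervalIntegral.integral_congr (g := fun φ => vθ r φ - vθ 0 φ)
        (fun φ _ => inner φ)]
      rw [intervalIntegral.integral_sub ((hvθcont r hr).intervalIntegrable _ _)
        ((hvθcont 0 h0J).intervalIntegrable _ _)]
      rw [intervalIntegral.integral_eq_sub_of_hasDerivAt (fun x _ => hv r hr x)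
        ((hvθcont r hr).intervalIntegrable _ _)]
      rw [intervalIntegral.integral_eq_sub_of_hasDerivAt (fun x _ => hv 0 h0J x)
        ((hvθcont 0 h0J).intervalIntegrable _ _)]
    rw [intervalIntegral.integral_sub (ia.sub ib) ic, intervalIntegral.integral_sub ia ib,
      i1, i2, i3]
    ring
  obtain ⟨t₂, ht₂, hlt⟩ := hgt t ht
  have := vanish hfc key ht (hpos t ht) hlt (hIccJ t₂ ht₂)
  linarith [this]

lemma clairaut_deriv {v vθ vt vtθ : ℝ → ℝ → ℝ}
    (h0J : (0:ℝ) ∈ J) (hpos : ∀ x ∈ J, 0 ≤ x)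
    (hIccJ : ∀ t ∈ J, Icc 0 t ⊆ J) (hgt : ∀ t ∈ J, ∃ t₂ ∈ J, t < t₂)
    (hv : ∀ t ∈ J, ∀ θ : ℝ, HasDerivAt (v t) (vθ t θ) θ)
    (hvθcont : ∀ t ∈ J, Continuous (vθ t))
    (hvt : ∀ θ : ℝ, ∀ t ∈ J, HasDerivWithinAt (fun s => v s θ) (vt t θ) J t)
    (hvθt : ∀ θ : ℝ, ∀ t ∈ J, HasDerivWithinAt (fun s => vθ s θ) (vtθ t θ) J t)
    (hvtc : ContinuousOn (fun p : ℝ × ℝ => vt p.1 p.2) (J ×ˢ univ))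
    (hvtθc : ContinuousOn (fun p : ℝ × ℝ => vtθ p.1 p.2) (J ×ˢ univ)) :
    ∀ t ∈ J, ∀ θ : ℝ, HasDerivAt (vt t) (vtθ t θ) θ := by
  intro t ht θ
  have hid := clairaut h0J hpos hIccJ hgt hv hvθcont hvt hvθt hvtc hvtθc t ht
  have hcont : Continuous (vtθ t) := cont_slice hvtθc ht
  have h1 : HasDerivAt (fun θ' => vt t 0 + ∫ φ in (0:ℝ)..θ', vtθ t φ) (vtθ t θ) θ := by
    have := intervalIntegral.integral_hasDerivAt_right (hcont.intervalIntegrable 0 θ)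
      ⟨univ, univ_mem, hcont.aestronglyMeasurable⟩ hcont.continuousAt
    exact this.const_add (vt t 0)
  exact h1.congr_of_eventuallyEq (Eventually.of_forall fun θ' => hid θ')

end Stmt19

open Stmt19 MeasureTheory in

/-- for the μ-Degasperis–Procesi equation (λ = 3), the velocity satisfies
u_t + u u_θ = 3σ Q, where Q is the mean-zero antiderivative of u - σ. -/
theorem stmt_19 (T : EReal) (hT : 0 < T)
    (J : Set ℝ) (hJ : J = {t : ℝ | 0 ≤ t ∧ (t : EReal) < T})
    (u ut uθ utθ uθθ utθθ uθθθ Q : ℝ → ℝ → ℝ) (σ : ℝ)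
    (huper : ∀ t ∈ J, ∀ θ : ℝ, u t (θ + 1) = u t θ)
    -- u is C³ in θ
    (huθ : ∀ t ∈ J, ∀ θ : ℝ, HasDerivAt (u t) (uθ t θ) θ)
    (huθθ : ∀ t ∈ J, ∀ θ : ℝ, HasDerivAt (uθ t) (uθθ t θ) θ)
    (huθθθ : ∀ t ∈ J, ∀ θ : ℝ, HasDerivAt (uθθ t) (uθθθ t θ) θ)
    (huθθθc : ∀ t ∈ J, Continuous (uθθθ t))
    -- u is C¹ in t, with continuous mixed partials u_t, u_tθ, u_tθθ
    (hut : ∀ θ : ℝ, ∀ t ∈ J, HasDerivWithinAt (fun s => u s θ) (ut t θ) J t)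
    (hutθ : ∀ θ : ℝ, ∀ t ∈ J, HasDerivWithinAt (fun s => uθ s θ) (utθ t θ) J t)
    (hutθθ : ∀ θ : ℝ, ∀ t ∈ J, HasDerivWithinAt (fun s => uθθ s θ) (utθθ t θ) J t)
    (hutc : ContinuousOn (fun p : ℝ × ℝ => ut p.1 p.2) (J ×ˢ univ))
    (hutθc : ContinuousOn (fun p : ℝ × ℝ => utθ p.1 p.2) (J ×ˢ univ))
    (hutθθc : ContinuousOn (fun p : ℝ × ℝ => utθθ p.1 p.2) (J ×ˢ univ))
    -- σ = ∫₀¹ u(t,θ) dθ, constant in t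
    (hσ : ∀ t ∈ J, (∫ φ in (0:ℝ)..1, u t φ) = σ)
    -- the μDP equation: m_t + u m_θ + 3 u_θ m = 0 with m = σ - u_θθ
    (hPDE : ∀ t ∈ J, ∀ θ : ℝ,
      -(utθθ t θ) + u t θ * (-(uθθθ t θ)) + 3 * uθ t θ * (σ - uθθ t θ) = 0)
    -- Q(t,·) is the C¹ 1-periodic function with Q_θ = u - σ and mean zero
    (hQper : ∀ t ∈ J, ∀ θ : ℝ, Q t (θ + 1) = Q t θ)
    (hQθ : ∀ t ∈ J, ∀ θ : ℝ, HasDerivAt (Q t) (u t θ - σ) θ)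
    (hQint : ∀ t ∈ J, (∫ θ in (0:ℝ)..1, Q t θ) = 0) :
    ∀ t ∈ J, ∀ θ : ℝ, ut t θ + u t θ * uθ t θ = 3 * σ * Q t θ := by
  -- basic facts about J
  have hpos : ∀ x ∈ J, 0 ≤ x := by intro x hx; rw [hJ] at hx; exact hx.1
  have h0J : (0:ℝ) ∈ J := by
    rw [hJ]; exact ⟨le_refl 0, by rwa [EReal.coe_zero]⟩
  have hIccJ : ∀ t ∈ J, Icc 0 t ⊆ J := by
    intro t ht x hx
    rw [hJ] at ht ⊢
    exact ⟨hx.1, lt_of_le_of_lt (EReal.coe_le_coe_iff.2 hx.2) ht.2⟩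
  have hgt : ∀ t ∈ J, ∃ t₂ ∈ J, t < t₂ := by
    intro t ht
    rw [hJ] at ht
    obtain ⟨z, hz1, hz2⟩ := exists_between ht.2
    have hzt : z ≠ ⊤ := ne_top_of_lt hz2
    have hzb : z ≠ ⊥ := by
      intro h; rw [h] at hz1; exact (not_lt_bot hz1).elim
    have hz1' : (t : EReal) < (z.toReal : EReal) := by rwa [EReal.coe_toReal hzt hzb]
    have htz : t < z.toReal := EReal.coe_lt_coe_iff.1 hz1'
    refine ⟨z.toReal, ?_, htz⟩
    rw [hJ]
    exact ⟨le_trans ht.1 htz.le, by rwa [EReal.coe_toReal hzt hzb]⟩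
  have hud : ∀ t ∈ J, UniqueDiffWithinAt ℝ J t := by
    intro t ht
    obtain ⟨t₂, ht₂, hlt⟩ := hgt t ht
    have hsub : Icc t t₂ ⊆ J := fun x hx =>
      hIccJ t₂ ht₂ ⟨le_trans (hpos t ht) hx.1, hx.2⟩
    exact ((uniqueDiffOn_Icc hlt) t ⟨le_rfl, hlt.le⟩).mono hsub
  -- continuity of slices
  have hucont : ∀ t ∈ J, Continuous (u t) := fun t ht =>
    continuous_iff_continuousAt.2 fun θ => (huθ t ht θ).continuousAt
  have huθcont : ∀ t ∈ J, Continuous (uθ t) := fun t ht =>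
    continuous_iff_continuousAt.2 fun θ => (huθθ t ht θ).continuousAt
  have huθθcont : ∀ t ∈ J, Continuous (uθθ t) := fun t ht =>
    continuous_iff_continuousAt.2 fun θ => (huθθθ t ht θ).continuousAt
  have hQcont : ∀ t ∈ J, Continuous (Q t) := fun t ht =>
    continuous_iff_continuousAt.2 fun θ => (hQθ t ht θ).continuousAt
  -- mixed partials (Clairaut-type interchange)
  have hutd : ∀ t ∈ J, ∀ θ : ℝ, HasDerivAt (ut t) (utθ t θ) θ :=
    clairaut_deriv h0J hpos hIccJ hgt huθ huθcont hut hutθ hutc hutθc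
  have hutθd : ∀ t ∈ J, ∀ θ : ℝ, HasDerivAt (utθ t) (utθθ t θ) θ :=
    clairaut_deriv h0J hpos hIccJ hgt huθθ huθθcont hutθ hutθθ hutθc hutθθc
  -- periodicity of uθ and ut
  have huθper : ∀ t ∈ J, ∀ θ : ℝ, uθ t (θ + 1) = uθ t θ := by
    intro t ht θ
    have h1 : HasDerivAt (fun θ' => u t (θ' + 1)) (uθ t (θ + 1)) θ := by
      have := (huθ t ht (θ + 1)).comp θ ((hasDerivAt_id θ).add_const 1)
      simpa [Function.comp_def] using this
    have h2 : HasDerivAt (fun θ' => u t (θ' + 1)) (uθ t θ) θ := by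
      have heq : (fun θ' => u t (θ' + 1)) = u t := funext fun θ' => huper t ht θ'
      rw [heq]; exact huθ t ht θ
    exact h1.unique h2
  have hutper : ∀ t ∈ J, ∀ θ : ℝ, ut t (θ + 1) = ut t θ := by
    intro t ht θ
    have h1 : HasDerivWithinAt (fun s => u s θ) (ut t (θ + 1)) J t :=
      (hut (θ + 1) t ht).congr (fun y hy => (huper y hy θ).symm) (huper t ht θ).symm
    exact (h1.derivWithin (hud t ht)).symm.trans ((hut θ t ht).derivWithin (hud t ht))
  -- main argument
  intro t ht θ₀
  have hutcont : Continuous (ut t) :=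
    continuous_iff_continuousAt.2 fun θ => (hutd t ht θ).continuousAt
  set G : ℝ → ℝ := fun θ => ut t θ + u t θ * uθ t θ - 3 * σ * Q t θ with hGdef
  set G' : ℝ → ℝ := fun θ =>
    utθ t θ + (uθ t θ * uθ t θ + u t θ * uθθ t θ) - 3 * σ * (u t θ - σ) with hG'def
  have hG'at : ∀ θ : ℝ, HasDerivAt G (G' θ) θ := fun θ =>
    ((hutd t ht θ).add ((huθ t ht θ).mul (huθθ t ht θ))).sub ((hQθ t ht θ).const_mul (3 * σ))
  have hG''at : ∀ θ : ℝ, HasDerivAt G' 0 θ := by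
    intro θ
    have hs : HasDerivAt (fun θ => u t θ - σ) (uθ t θ) θ := (huθ t ht θ).sub_const σ
    have h : HasDerivAt G'
        (utθθ t θ + ((uθθ t θ * uθ t θ + uθ t θ * uθθ t θ)
          + (uθ t θ * uθθ t θ + u t θ * uθθθ t θ)) - 3 * σ * uθ t θ) θ :=
      ((hutθd t ht θ).add (((huθθ t ht θ).mul (huθθ t ht θ)).add
        ((huθ t ht θ).mul (huθθθ t ht θ)))).sub (hs.const_mul (3 * σ))
    have hD : utθθ t θ + ((uθθ t θ * uθ t θ + uθ t θ * uθθ t θ)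
          + (uθ t θ * uθθ t θ + u t θ * uθθθ t θ)) - 3 * σ * uθ t θ = 0 := by
      linear_combination -(hPDE t ht θ)
    exact hD ▸ h
  -- G' is constant, hence G is affine
  have hG'c : ∀ a b : ℝ, G' a = G' b := fun a b =>
    is_const_of_deriv_eq_zero (fun x => (hG''at x).differentiableAt)
      (fun x => (hG''at x).deriv) a b
  have hGaffine : ∀ θ : ℝ, G θ = G 0 + G' 0 * θ := by
    intro θ
    have hH : ∀ x : ℝ, HasDerivAt (fun y => G y - G' 0 * y) 0 x := by
      intro x
      have := (hG'at x).sub ((hasDerivAt_id x).const_mul (G' 0))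
      simpa [hG'c x 0, Pi.sub_def] using this
    have h0 : G θ - G' 0 * θ = G 0 - G' 0 * 0 :=
      is_const_of_deriv_eq_zero (fun x => (hH x).differentiableAt)
        (fun x => (hH x).deriv) θ 0
    linarith [h0]
  -- periodicity kills the linear part
  have hG1 : G (0 + 1) = G 0 := by
    simp only [hGdef]
    rw [huper t ht 0, huθper t ht 0, hutper t ht 0, hQper t ht 0]
  have hG'0 : G' 0 = 0 := by
    have h1 := hGaffine (0 + 1)
    rw [hG1] at h1
    linarith [h1]
  have hGconst : ∀ θ : ℝ, G θ = G 0 := by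
    intro θ; rw [hGaffine θ, hG'0]; ring
  -- the mean of G is the mean of ut
  have hu1 : u t 1 = u t 0 := by
    have := huper t ht 0; rwa [zero_add] at this
  have hsq : (∫ θ in (0:ℝ)..1, u t θ * uθ t θ) = 0 := by
    have hder : ∀ x ∈ uIcc (0:ℝ) 1,
        HasDerivAt (fun θ => u t θ * u t θ / 2) (u t x * uθ t x) x := by
      intro x _
      have := ((huθ t ht x).mul (huθ t ht x)).div_const 2
      rw [show u t x * uθ t x = (uθ t x * u t x + u t x * uθ t x) / 2 by ring]
      exact this
    rw [intervalIntegral.integral_eq_sub_of_hasDerivAt hder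
      (((hucont t ht).mul (huθcont t ht)).intervalIntegrable _ _)]
    rw [hu1]; ring
  have hGint : (∫ θ in (0:ℝ)..1, G θ) = G 0 := by
    rw [intervalIntegral.integral_congr (g := fun _ => G 0) (fun x _ => hGconst x)]
    simp
  have hsplit : (∫ θ in (0:ℝ)..1, G θ)
      = (∫ θ in (0:ℝ)..1, ut t θ) + (∫ θ in (0:ℝ)..1, u t θ * uθ t θ)
        - 3 * σ * (∫ θ in (0:ℝ)..1, Q t θ) := by
    have h1 : IntervalIntegrable (fun θ => ut t θ) volume 0 1 :=
      hutcont.intervalIntegrable _ _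
    have h2 : IntervalIntegrable (fun θ => u t θ * uθ t θ) volume 0 1 :=
      ((hucont t ht).mul (huθcont t ht)).intervalIntegrable _ _
    have h3 : IntervalIntegrable (fun θ => 3 * σ * Q t θ) volume 0 1 :=
      (continuous_const.mul (hQcont t ht)).intervalIntegrable _ _
    rw [show G = fun θ => (ut t θ + u t θ * uθ t θ) - 3 * σ * Q t θ from rfl]
    rw [intervalIntegral.integral_sub (h1.add h2) h3,
      intervalIntegral.integral_add h1 h2, intervalIntegral.integral_const_mul]
  -- the mean of ut vanishes
  have hIfun : ContinuousOn (fun s => ∫ φ in (0:ℝ)..1, ut s φ) J := by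
    intro x hx
    obtain ⟨t₂, ht₂, hlt⟩ := hgt x hx
    exact param_cont hpos hutc 0 1 hx hlt (hIccJ t₂ ht₂)
  have hIint : ∀ r ∈ J, (∫ s in (0:ℝ)..r, (∫ φ in (0:ℝ)..1, ut s φ)) = 0 := by
    intro r hr
    have hr0 := hpos r hr
    rw [fubini hutc hr0 (hIccJ r hr) (by norm_num : (0:ℝ) ≤ 1)]
    rw [intervalIntegral.integral_congr (g := fun φ => u r φ - u 0 φ)
      (fun φ _ => ftc_t (fun s hs => hut φ s hs) (cont_tslice hutc φ) hr0 (hIccJ r hr))]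
    rw [intervalIntegral.integral_sub ((hucont r hr).intervalIntegrable _ _)
      ((hucont 0 h0J).intervalIntegrable _ _), hσ r hr, hσ 0 h0J]
    ring
  have hI0 : (∫ φ in (0:ℝ)..1, ut t φ) = 0 := by
    obtain ⟨t₂, ht₂, hlt⟩ := hgt t ht
    exact vanish hIfun hIint ht (hpos t ht) hlt (hIccJ t₂ ht₂)
  -- conclude
  have hG0 : G 0 = 0 := by
    rw [← hGint, hsplit, hI0, hsq, hQint t ht]
    ring
  have hfinal : G θ₀ = 0 := (hGconst θ₀).trans hG0
  simp only [hGdef] at hfinal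
  linarith [hfinal]
end
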